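/- arXiv:2101.08203 — 6 statements merged into one kernel-verified Lean document; each statement's English description precedes it below -/
import Mathlib

section
/- Fix T ∈ (0,∞) and t* ∈ (0,T). For each M ∈ ℕ let α_M : [0,t*] → [0,∞) be a differentiable nonnegative function, and suppose there are constants C > 0, C₀ ≥ 0, ε > 0, an integer q ≥ 1, a number α₀ ≥ 0, and M̃ ∈ ℕ, all independent of M and t*, such that for every M ≥ M̃ and every t ∈ [0,t*] one has α_M'(t) ≤ C·(C₀ + α_M(t) + ε·α_M(t)^{q+1}) and α_M(0) = α₀. If ε·e^{TCq}·(α₀+C₀)^q < 1, then for every M ≥ M̃ and every t ∈ [0,t*]: α_M(t) ≤ (α₀+C₀)·e^{TC} / (1 − ε·e^{TCq}·(α₀+C₀)^q)^{1/q} − C₀. -/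
open Real Set Filter Topology

lemma gronwall_aux (T tstar C ε b : ℝ) (q : ℕ) (g g' : ℝ → ℝ)
    (hC : 0 < C) (hε : 0 < ε) (hq : 1 ≤ q) (hb : 0 < b)
    (ht0 : 0 < tstar) (htT : tstar ≤ T)
    (hderiv : ∀ t ∈ Set.Icc 0 tstar, HasDerivWithinAt g (g' t) (Set.Icc 0 tstar) t)
    (hpos : ∀ t ∈ Set.Icc 0 tstar, 0 < g t)
    (hbound : ∀ t ∈ Set.Icc 0 tstar, g' t ≤ C * (g t + ε * g t ^ (q + 1)))
    (hinit : g 0 = b)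
    (hsmall : ε * Real.exp (T * C * q) * b ^ q < 1) :
    ∀ t ∈ Set.Icc 0 tstar,
      g t ≤ b * Real.exp (T * C) /
        (1 - ε * Real.exp (T * C * q) * b ^ q) ^ ((1:ℝ) / (q : ℝ)) := by
  obtain ⟨r, rfl⟩ : ∃ r, q = r + 1 := ⟨q - 1, (Nat.succ_pred_eq_of_pos hq).symm⟩
  set q : ℕ := r + 1 with hqdef
  have hq0 : (0:ℝ) < q := by positivity
  set c : ℝ := (q : ℝ) * C with hc
  have hc0 : 0 < c := by positivity
  set F : ℝ → ℝ := fun t => Real.exp (c * t) / g t ^ q + ε * Real.exp (c * t) with hF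
  set F' : ℝ → ℝ := fun t =>
    (Real.exp (c * t) * c * g t ^ q - Real.exp (c * t) * ((q : ℝ) * g t ^ (q - 1) * g' t)) /
      (g t ^ q) ^ 2 + ε * (Real.exp (c * t) * c) with hF'
  have hexp : ∀ t : ℝ, HasDerivAt (fun s => Real.exp (c * s)) (Real.exp (c * t) * c) t := by
    intro t
    simpa using ((hasDerivAt_id t).const_mul c).exp
  have hFderiv : ∀ t ∈ Set.Icc 0 tstar,
      HasDerivWithinAt F (F' t) (Set.Icc 0 tstar) t := by
    intro t ht
    have hgq : HasDerivWithinAt (fun s => g s ^ q) ((q : ℝ) * g t ^ (q - 1) * g' t)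
        (Set.Icc 0 tstar) t := (hderiv t ht).pow q
    have hgt : 0 < g t := hpos t ht
    have hne : g t ^ q ≠ 0 := by positivity
    exact (((hexp t).hasDerivWithinAt.div hgq hne).add
      (((hexp t).hasDerivWithinAt).const_mul ε))
  have hmono : MonotoneOn F (Set.Icc 0 tstar) := by
    apply monotoneOn_of_hasDerivWithinAt_nonneg (convex_Icc 0 tstar)
      (fun t ht => (hFderiv t ht).continuousWithinAt)
      (f' := F') (fun t ht => (hFderiv t (interior_subset ht)).mono interior_subset)
    intro t ht
    have ht' : t ∈ Set.Icc 0 tstar := interior_subset ht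
    have hx : 0 < g t := hpos t ht'
    have hd : g' t ≤ C * (g t + ε * g t ^ (q + 1)) := hbound t ht'
    have hE : 0 < Real.exp (c * t) := Real.exp_pos _
    set x := g t
    set E := Real.exp (c * t)
    set d := g' t
    have hB : (0:ℝ) < (x ^ q) ^ 2 := by positivity
    have h1 : -(ε * (E * c)) ≤ (E * c * x ^ q - E * ((q : ℝ) * x ^ (q - 1) * d)) / (x ^ q) ^ 2 := by
      rw [le_div_iff₀ hB]
      have hq1 : q - 1 = r := rfl
      have key : E * ((q : ℝ) * x ^ (q - 1) * d) ≤
          E * ((q : ℝ) * x ^ (q - 1) * (C * (x + ε * x ^ (q + 1)))) := by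
        apply mul_le_mul_of_nonneg_left _ hE.le
        apply mul_le_mul_of_nonneg_left hd
        positivity
      have expand : E * ((q : ℝ) * x ^ (q - 1) * (C * (x + ε * x ^ (q + 1)))) =
          E * c * x ^ q + ε * (E * c) * (x ^ q) ^ 2 := by
        rw [hq1, hqdef]; simp only [hc, hqdef]; push_cast; ring
      nlinarith [key, expand]
    simp only [hF']
    nlinarith [h1]
  intro t ht
  have hx : 0 < g t := hpos t ht
  have hmem0 : (0:ℝ) ∈ Set.Icc 0 tstar := ⟨le_refl 0, ht0.le⟩
  have hF0 : F 0 ≤ F t := hmono hmem0 ht ht.1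
  have hF0val : F 0 = 1 / b ^ q + ε := by
    simp [hF, hinit]
  have hcT : c * t ≤ T * C * q := by
    have : c * t ≤ c * T := by
      apply mul_le_mul_of_nonneg_left (le_trans ht.2 htT) hc0.le
    calc c * t ≤ c * T := this
      _ = T * C * q := by rw [hc]; ring
  have hET : Real.exp (c * t) ≤ Real.exp (T * C * q) := Real.exp_le_exp.mpr hcT
  set m := ε * Real.exp (T * C * q) * b ^ q with hm
  have hP : 0 < 1 - m := by linarith
  -- from F 0 ≤ F t : exp(ct)/g^q ≥ 1/b^q + ε - ε exp(ct) ≥ (1-m)/b^q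
  have h2 : (1 - m) / b ^ q ≤ Real.exp (c * t) / g t ^ q := by
    have : 1 / b ^ q + ε ≤ Real.exp (c * t) / g t ^ q + ε * Real.exp (c * t) := by
      rw [← hF0val]; exact hF0
    have hbq : (0:ℝ) < b ^ q := by positivity
    have hmb : (1 - m) / b ^ q = 1 / b ^ q - ε * Real.exp (T * C * q) := by
      field_simp [hm]; ring
    rw [hmb]
    nlinarith [this, hET, hε]
  have h3 : g t ^ q ≤ Real.exp (T * C * q) * b ^ q / (1 - m) := by
    have hbq : (0:ℝ) < b ^ q := by positivity
    have hgq : (0:ℝ) < g t ^ q := by positivity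
    rw [div_le_div_iff₀ hbq hgq] at h2
    rw [le_div_iff₀ hP]
    nlinarith [h2, hET, hgq]
  -- compare with q-th power of the RHS
  set R := b * Real.exp (T * C) / (1 - m) ^ ((1:ℝ) / (q : ℝ)) with hR
  have hRpos : 0 < R := by
    apply div_pos (by positivity)
    exact Real.rpow_pos_of_pos hP _
  have hRq : R ^ q = Real.exp (T * C * q) * b ^ q / (1 - m) := by
    rw [hR, div_pow, mul_pow]
    congr 1
    · rw [← Real.exp_nat_mul]
      ring_nf
    · rw [← Real.rpow_natCast ((1-m) ^ ((1:ℝ)/(q:ℝ))) q, ← Real.rpow_mul hP.le]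
      rw [one_div_mul_cancel (by positivity : (q:ℝ) ≠ 0), Real.rpow_one]
  have : g t ^ q ≤ R ^ q := by rw [hRq]; exact h3
  exact le_of_pow_le_pow_left₀ (by omega) hRpos.le this


/-- Generalised Gronwall lemma: a sequence of nonnegative differentiable functions on
`[0, t*]` satisfying a superlinear differential inequality with a small coefficient `ε`
on the superlinear term admits a uniform bound. -/
theorem generalized_gronwall
    (T tstar : ℝ) (hT : 0 < T) (htstar : tstar ∈ Set.Ioo 0 T)
    (α α' : ℕ → ℝ → ℝ)
    (C C₀ ε α₀ : ℝ) (q : ℕ)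
    (hC : 0 < C) (hC₀ : 0 ≤ C₀) (hε : 0 < ε) (hq : 1 ≤ q) (hα₀ : 0 ≤ α₀)
    (Mtilde : ℕ)
    (hderiv : ∀ M, Mtilde ≤ M → ∀ t ∈ Set.Icc 0 tstar,
      HasDerivWithinAt (α M) (α' M t) (Set.Icc 0 tstar) t)
    (hnonneg : ∀ M, Mtilde ≤ M → ∀ t ∈ Set.Icc 0 tstar, 0 ≤ α M t)
    (hbound : ∀ M, Mtilde ≤ M → ∀ t ∈ Set.Icc 0 tstar,
      α' M t ≤ C * (C₀ + α M t + ε * (α M t) ^ (q + 1)))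
    (hinit : ∀ M, Mtilde ≤ M → α M 0 = α₀)
    (hsmall : ε * Real.exp (T * C * q) * (α₀ + C₀) ^ q < 1) :
    ∀ M, Mtilde ≤ M → ∀ t ∈ Set.Icc 0 tstar,
      α M t ≤ (α₀ + C₀) * Real.exp (T * C) /
        (1 - ε * Real.exp (T * C * q) * (α₀ + C₀) ^ q) ^ ((1:ℝ) / (q : ℝ)) - C₀ := by
  intro M hM t ht
  set A := α₀ + C₀ with hA
  set K := Real.exp (T * C * q) with hK
  set f : ℝ → ℝ := fun δ =>
    (A + δ) * Real.exp (T * C) / (1 - ε * K * (A + δ) ^ q) ^ ((1:ℝ) / (q : ℝ)) with hf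
  -- step 1: for small positive δ, α M t + C₀ + δ ≤ f δ
  have hstep : ∀ δ > 0, ε * K * (A + δ) ^ q < 1 → α M t + C₀ + δ ≤ f δ := by
    intro δ hδ hsm
    have hb : 0 < A + δ := by positivity
    have := gronwall_aux T tstar C ε (A + δ) q
      (fun s => α M s + (C₀ + δ)) (α' M) hC hε hq hb htstar.1 htstar.2.le
      (fun s hs => (hderiv M hM s hs).add_const (C₀ + δ))
      (fun s hs => by have := hnonneg M hM s hs; linarith)
      (fun s hs => by
        have h1 := hbound M hM s hs
        have ha := hnonneg M hM s hs
        have h2 : α M s ^ (q+1) ≤ (α M s + (C₀ + δ)) ^ (q+1) :=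
          pow_le_pow_left₀ ha (by linarith) _
        nlinarith [mul_pos hC hε, h2, hC])
      (by rw [hinit M hM]; rw [hA]; ring)
      (by exact hsm)
      t ht
    rw [add_assoc]
    exact this
  -- step 2: the smallness condition holds for δ in a neighborhood of 0
  have hcont1 : Continuous fun δ : ℝ => ε * K * (A + δ) ^ q := by continuity
  have hopen : ∀ᶠ δ in 𝓝 (0:ℝ), ε * K * (A + δ) ^ q < 1 := by
    have h0 : ε * K * (A + 0) ^ q < 1 := by simpa using hsmall
    exact (hcont1.continuousAt).eventually_lt continuousAt_const h0
  have hev : ∀ᶠ δ in 𝓝[>] (0:ℝ), α M t + C₀ + δ ≤ f δ := by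
    filter_upwards [hopen.filter_mono nhdsWithin_le_nhds, self_mem_nhdsWithin] with δ h1 h2
    exact hstep δ h2 h1
  -- step 3: limits
  have hlim1 : Tendsto (fun δ : ℝ => α M t + C₀ + δ) (𝓝[>] 0) (𝓝 (α M t + C₀)) := by
    have : Tendsto (fun δ : ℝ => α M t + C₀ + δ) (𝓝 0) (𝓝 (α M t + C₀ + 0)) :=
      (continuous_const.add continuous_id).tendsto 0
    simpa using this.mono_left nhdsWithin_le_nhds
  have hP : (0:ℝ) < 1 - ε * K * A ^ q := by
    linarith
  have hlim2 : Tendsto f (𝓝[>] 0) (𝓝 (f 0)) := by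
    have hca : ContinuousAt f 0 := by
      apply ContinuousAt.div
      · fun_prop
      · have hbase : ContinuousAt (fun δ : ℝ => 1 - ε * K * (A + δ) ^ q) 0 := by fun_prop
        exact hbase.rpow_const (Or.inr (by positivity))
      · have : (0:ℝ) < (1 - ε * K * (A + 0) ^ q) ^ ((1:ℝ)/(q:ℝ)) :=
          Real.rpow_pos_of_pos (by simpa using hP) _
        exact ne_of_gt this
    exact hca.continuousWithinAt.tendsto
  have hfin : α M t + C₀ ≤ f 0 := le_of_tendsto_of_tendsto hlim1 hlim2 hev
  have hf0 : f 0 = A * Real.exp (T * C) / (1 - ε * K * A ^ q) ^ ((1:ℝ)/(q:ℝ)) := by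
    simp [hf]
  rw [hf0] at hfin
  rw [hA, hK] at hfin
  linarith
end

section
/- For every θ > 0 and δ ∈ (0,1), the regularized logarithmic potential F_δ^log is twice continuously differentiable on ℝ, satisfies 0 ≤ (F_δ^log)''(r) ≤ (θ/2)·(1/δ + 1/(2−δ)) for all r ∈ ℝ — in particular F_δ^log is convex and φ_δ is Lipschitz continuous with Lipschitz constant (θ/2)·(1/δ + 1/(2−δ)) — and F_δ^log(r) ≥ 0 for all r ∈ ℝ. -/
open Real Set

/-- The regularized logarithmic potential `F_δ^log` at temperature `θ`. -/
noncomputable def Flogδ (θ δ : ℝ) (r : ℝ) : ℝ :=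
  if 1 - δ ≤ r then
    (θ/2) * ((1-r) * Real.log δ + (1+r) * Real.log (2-δ)
      + (1-r)^2/(2*δ) + (1+r)^2/(2*(2-δ)) - 1)
  else if r ≤ -(1-δ) then
    (θ/2) * ((1+r) * Real.log δ + (1-r) * Real.log (2-δ)
      + (1+r)^2/(2*δ) + (1-r)^2/(2*(2-δ)) - 1)
  else
    (θ/2) * ((1+r) * Real.log (1+r) + (1-r) * Real.log (1-r))

open Filter

section aux
variable {θ δ : ℝ}

/-- The derivative `φ_δ` of the regularized logarithmic potential. -/
noncomputable def philogδ (θ δ r : ℝ) : ℝ :=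
  if 1 - δ ≤ r then
    θ/2 * (Real.log (2-δ) - Real.log δ) + θ/2 * (1/δ + 1/(2-δ)) * (r - (1-δ))
  else if r ≤ -(1-δ) then
    θ/2 * (Real.log δ - Real.log (2-δ)) + θ/2 * (1/δ + 1/(2-δ)) * (r + (1-δ))
  else
    θ/2 * (Real.log (1+r) - Real.log (1-r))

/-- The second derivative `ψ_δ`. -/
noncomputable def psilogδ (θ δ r : ℝ) : ℝ :=
  θ/2 * (1/(1 + max (-(1-δ)) (min (1-δ) r)) + 1/(1 - max (-(1-δ)) (min (1-δ) r)))

section aux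
variable {θ δ : ℝ}

lemma midHasDeriv (θ : ℝ) {r : ℝ} (h1 : -1 < r) (h2 : r < 1) :
    HasDerivAt (fun r => θ/2 * ((1+r) * Real.log (1+r) + (1-r) * Real.log (1-r)))
      (θ/2 * (Real.log (1+r) - Real.log (1-r))) r := by
  have ha : (0:ℝ) < 1 + r := by linarith
  have hb : (0:ℝ) < 1 - r := by linarith
  have h1' : HasDerivAt (fun r : ℝ => 1 + r) 1 r := by
    simpa using (hasDerivAt_id r).const_add 1
  have h2' : HasDerivAt (fun r : ℝ => 1 - r) (-1) r := by
    simpa using (hasDerivAt_id r).const_sub 1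
  have hl1 : HasDerivAt (fun r : ℝ => Real.log (1+r)) ((1+r)⁻¹ * 1) r :=
    (Real.hasDerivAt_log ha.ne').comp r h1'
  have hl2 : HasDerivAt (fun r : ℝ => Real.log (1-r)) ((1-r)⁻¹ * (-1)) r :=
    (Real.hasDerivAt_log hb.ne').comp r h2'
  have := ((h1'.mul hl1).add (h2'.mul hl2)).const_mul (θ/2)
  refine this.congr_deriv ?_
  field_simp
  ring

lemma rightHasDeriv (θ : ℝ) (hδ0 : 0 < δ) (hδ1 : δ < 1) (r : ℝ) :
    HasDerivAt (fun r => θ/2 * ((1-r) * Real.log δ + (1+r) * Real.log (2-δ)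
        + (1-r)^2/(2*δ) + (1+r)^2/(2*(2-δ)) - 1))
      (θ/2 * (Real.log (2-δ) - Real.log δ) + θ/2 * (1/δ + 1/(2-δ)) * (r - (1-δ))) r := by
  have h2δ : (0:ℝ) < 2 - δ := by linarith
  have h1' : HasDerivAt (fun r : ℝ => 1 + r) 1 r := by
    simpa using (hasDerivAt_id r).const_add 1
  have h2' : HasDerivAt (fun r : ℝ => 1 - r) (-1) r := by
    simpa using (hasDerivAt_id r).const_sub 1
  have := (((((h2'.mul_const (Real.log δ)).add (h1'.mul_const (Real.log (2-δ)))).add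
    ((h2'.pow 2).div_const (2*δ))).add ((h1'.pow 2).div_const (2*(2-δ)))).sub_const 1).const_mul (θ/2)
  refine this.congr_deriv ?_
  field_simp
  ring

lemma leftHasDeriv (θ : ℝ) (hδ0 : 0 < δ) (hδ1 : δ < 1) (r : ℝ) :
    HasDerivAt (fun r => θ/2 * ((1+r) * Real.log δ + (1-r) * Real.log (2-δ)
        + (1+r)^2/(2*δ) + (1-r)^2/(2*(2-δ)) - 1))
      (θ/2 * (Real.log δ - Real.log (2-δ)) + θ/2 * (1/δ + 1/(2-δ)) * (r + (1-δ))) r := by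
  have h2δ : (0:ℝ) < 2 - δ := by linarith
  have h1' : HasDerivAt (fun r : ℝ => 1 + r) 1 r := by
    simpa using (hasDerivAt_id r).const_add 1
  have h2' : HasDerivAt (fun r : ℝ => 1 - r) (-1) r := by
    simpa using (hasDerivAt_id r).const_sub 1
  have := (((((h1'.mul_const (Real.log δ)).add (h2'.mul_const (Real.log (2-δ)))).add
    ((h1'.pow 2).div_const (2*δ))).add ((h2'.pow 2).div_const (2*(2-δ)))).sub_const 1).const_mul (θ/2)
  refine this.congr_deriv ?_
  field_simp
  ring

lemma Fval_right {r : ℝ} (h : 1 - δ ≤ r) :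
    Flogδ θ δ r = θ/2 * ((1-r) * Real.log δ + (1+r) * Real.log (2-δ)
      + (1-r)^2/(2*δ) + (1+r)^2/(2*(2-δ)) - 1) := by
  simp only [Flogδ, if_pos h]

lemma Fval_left (hδ1 : δ < 1) {r : ℝ} (h : r ≤ -(1-δ)) :
    Flogδ θ δ r = θ/2 * ((1+r) * Real.log δ + (1-r) * Real.log (2-δ)
      + (1+r)^2/(2*δ) + (1-r)^2/(2*(2-δ)) - 1) := by
  have : ¬ (1 - δ ≤ r) := by intro h'; linarith
  simp only [Flogδ, if_neg this, if_pos h]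

lemma Fval_mid (hδ0 : 0 < δ) (hδ1 : δ < 1) {r : ℝ} (h1 : -(1-δ) ≤ r) (h2 : r ≤ 1-δ) :
    Flogδ θ δ r = θ/2 * ((1+r) * Real.log (1+r) + (1-r) * Real.log (1-r)) := by
  have h2δ : (0:ℝ) < 2 - δ := by linarith
  rcases eq_or_lt_of_le h2 with he | hlt
  · subst he
    rw [Fval_right le_rfl, show (1:ℝ) + (1-δ) = 2 - δ by ring, show (1:ℝ) - (1-δ) = δ by ring]
    field_simp
    ring
  · rcases eq_or_lt_of_le h1 with he | hgt
    · rw [Fval_left hδ1 he.ge, ← he, show (1:ℝ) + -(1-δ) = δ by ring,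
        show (1:ℝ) - -(1-δ) = 2 - δ by ring]
      field_simp
      ring
    · have hna : ¬ (1 - δ ≤ r) := not_le.mpr hlt
      have hnb : ¬ (r ≤ -(1-δ)) := not_le.mpr hgt
      simp only [Flogδ, if_neg hna, if_neg hnb]
lemma hasDerivAt_Flog (hδ0 : 0 < δ) (hδ1 : δ < 1) (r : ℝ) :
    HasDerivAt (Flogδ θ δ) (philogδ θ δ r) r := by
  have h2δ : (0:ℝ) < 2 - δ := by linarith
  have hεpos : (0:ℝ) < 1 - δ := by linarith
  rcases lt_trichotomy r (1-δ) with hr1 | hr1 | hr1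
  · rcases lt_trichotomy r (-(1-δ)) with hr2 | hr2 | hr2
    · -- left open region
      have hφ : philogδ θ δ r = θ/2 * (Real.log δ - Real.log (2-δ))
          + θ/2 * (1/δ + 1/(2-δ)) * (r + (1-δ)) := by
        simp only [philogδ, if_neg (not_le.mpr hr1), if_pos hr2.le]
      rw [hφ]
      refine (leftHasDeriv θ hδ0 hδ1 r).congr_of_eventuallyEq ?_
      filter_upwards [Iio_mem_nhds hr2] with s hs
      exact Fval_left hδ1 (le_of_lt hs)
    · -- boundary point r = -(1-δ)
      subst hr2
      have hφ : philogδ θ δ (-(1-δ)) = θ/2 * (Real.log δ - Real.log (2-δ)) := by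
        simp only [philogδ, if_neg (not_le.mpr hr1), if_pos le_rfl]
        ring
      rw [hφ]
      rw [← hasDerivWithinAt_univ, ← Iic_union_Ici (a := -(1-δ))]
      apply HasDerivWithinAt.union
      · -- within Iic, F = left piece
        have hd := (leftHasDeriv θ hδ0 hδ1 (-(1-δ))).hasDerivWithinAt (s := Iic (-(1-δ)))
        have heq : (θ/2 * (Real.log δ - Real.log (2-δ))
            + θ/2 * (1/δ + 1/(2-δ)) * ((-(1-δ)) + (1-δ)))
            = θ/2 * (Real.log δ - Real.log (2-δ)) := by ring
        rw [heq] at hd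
        refine hd.congr_of_eventuallyEq ?_ (Fval_left hδ1 le_rfl)
        filter_upwards [self_mem_nhdsWithin] with s hs
        exact Fval_left hδ1 hs
      · -- within Ici, F = middle piece
        have hd := (midHasDeriv θ (r := -(1-δ)) (by linarith) (by linarith)).hasDerivWithinAt
          (s := Ici (-(1-δ)))
        have heq : θ/2 * (Real.log (1 + -(1-δ)) - Real.log (1 - -(1-δ)))
            = θ/2 * (Real.log δ - Real.log (2-δ)) := by
          rw [show (1:ℝ) + -(1-δ) = δ by ring, show (1:ℝ) - -(1-δ) = 2 - δ by ring]
        rw [heq] at hd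
        refine hd.congr_of_eventuallyEq ?_ (Fval_mid hδ0 hδ1 le_rfl (by linarith))
        filter_upwards [self_mem_nhdsWithin,
          eventually_nhdsWithin_of_eventually_nhds (eventually_lt_nhds (by linarith : -(1-δ) < 1-δ))]
          with s hs1 hs2
        exact Fval_mid hδ0 hδ1 hs1 hs2.le
    · -- middle open region
      have hφ : philogδ θ δ r = θ/2 * (Real.log (1+r) - Real.log (1-r)) := by
        simp only [philogδ, if_neg (not_le.mpr hr1), if_neg (not_le.mpr hr2)]
      rw [hφ]
      refine (midHasDeriv θ (by linarith) (by linarith)).congr_of_eventuallyEq ?_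
      filter_upwards [Ioo_mem_nhds hr2 hr1] with s hs
      exact Fval_mid hδ0 hδ1 hs.1.le hs.2.le
  · -- boundary point r = 1-δ
    subst hr1
    have hφ : philogδ θ δ (1-δ) = θ/2 * (Real.log (2-δ) - Real.log δ) := by
      simp only [philogδ, if_pos le_rfl]
      ring
    rw [hφ]
    rw [← hasDerivWithinAt_univ, ← Iic_union_Ici (a := (1-δ))]
    apply HasDerivWithinAt.union
    · have hd := (midHasDeriv θ (r := 1-δ) (by linarith) (by linarith)).hasDerivWithinAt
        (s := Iic (1-δ))
      have heq : θ/2 * (Real.log (1 + (1-δ)) - Real.log (1 - (1-δ)))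
          = θ/2 * (Real.log (2-δ) - Real.log δ) := by
        rw [show (1:ℝ) + (1-δ) = 2 - δ by ring, show (1:ℝ) - (1-δ) = δ by ring]
      rw [heq] at hd
      refine hd.congr_of_eventuallyEq ?_ (Fval_mid hδ0 hδ1 (by linarith) le_rfl)
      filter_upwards [self_mem_nhdsWithin,
        eventually_nhdsWithin_of_eventually_nhds (eventually_gt_nhds (by linarith : -(1-δ) < 1-δ))]
        with s hs1 hs2
      exact Fval_mid hδ0 hδ1 hs2.le hs1
    · have hd := (rightHasDeriv θ hδ0 hδ1 (1-δ)).hasDerivWithinAt (s := Ici (1-δ))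
      have heq : (θ/2 * (Real.log (2-δ) - Real.log δ)
          + θ/2 * (1/δ + 1/(2-δ)) * ((1-δ) - (1-δ)))
          = θ/2 * (Real.log (2-δ) - Real.log δ) := by ring
      rw [heq] at hd
      refine hd.congr_of_eventuallyEq ?_ (Fval_right le_rfl)
      filter_upwards [self_mem_nhdsWithin] with s hs
      exact Fval_right hs
  · -- right open region
    have hφ : philogδ θ δ r = θ/2 * (Real.log (2-δ) - Real.log δ)
        + θ/2 * (1/δ + 1/(2-δ)) * (r - (1-δ)) := by
      simp only [philogδ, if_pos hr1.le]
    rw [hφ]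
    refine (rightHasDeriv θ hδ0 hδ1 r).congr_of_eventuallyEq ?_
    filter_upwards [Ioi_mem_nhds hr1] with s hs
    exact Fval_right (le_of_lt hs)
lemma psival_right (hδ1 : δ < 1) {r : ℝ} (h : 1 - δ ≤ r) :
    psilogδ θ δ r = θ/2 * (1/δ + 1/(2-δ)) := by
  rw [psilogδ, min_eq_left h, max_eq_right (by linarith : -(1-δ) ≤ 1-δ),
    show (1:ℝ) + (1-δ) = 2 - δ by ring, show (1:ℝ) - (1-δ) = δ by ring]
  ring

lemma psival_left (hδ1 : δ < 1) {r : ℝ} (h : r ≤ -(1-δ)) :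
    psilogδ θ δ r = θ/2 * (1/δ + 1/(2-δ)) := by
  rw [psilogδ, min_eq_right (by linarith : r ≤ 1-δ), max_eq_left h,
    show (1:ℝ) + -(1-δ) = δ by ring, show (1:ℝ) - -(1-δ) = 2 - δ by ring]

lemma psival_mid {r : ℝ} (h1 : -(1-δ) ≤ r) (h2 : r ≤ 1-δ) :
    psilogδ θ δ r = θ/2 * (1/(1+r) + 1/(1-r)) := by
  rw [psilogδ, min_eq_right h2, max_eq_right h1]

lemma midphiHasDeriv (θ : ℝ) {r : ℝ} (h1 : -1 < r) (h2 : r < 1) :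
    HasDerivAt (fun r => θ/2 * (Real.log (1+r) - Real.log (1-r)))
      (θ/2 * (1/(1+r) + 1/(1-r))) r := by
  have ha : (0:ℝ) < 1 + r := by linarith
  have hb : (0:ℝ) < 1 - r := by linarith
  have h1' : HasDerivAt (fun r : ℝ => 1 + r) 1 r := by
    simpa using (hasDerivAt_id r).const_add 1
  have h2' : HasDerivAt (fun r : ℝ => 1 - r) (-1) r := by
    simpa using (hasDerivAt_id r).const_sub 1
  have hl1 : HasDerivAt (fun r : ℝ => Real.log (1+r)) ((1+r)⁻¹ * 1) r :=
    (Real.hasDerivAt_log ha.ne').comp r h1'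
  have hl2 : HasDerivAt (fun r : ℝ => Real.log (1-r)) ((1-r)⁻¹ * (-1)) r :=
    (Real.hasDerivAt_log hb.ne').comp r h2'
  have := (hl1.sub hl2).const_mul (θ/2)
  refine this.congr_deriv ?_
  ring

lemma linrHasDeriv (θ δ : ℝ) (r : ℝ) :
    HasDerivAt (fun r => θ/2 * (Real.log (2-δ) - Real.log δ)
        + θ/2 * (1/δ + 1/(2-δ)) * (r - (1-δ)))
      (θ/2 * (1/δ + 1/(2-δ))) r := by
  have : HasDerivAt (fun r : ℝ => r - (1-δ)) 1 r := by
    simpa using (hasDerivAt_id r).sub_const (1-δ)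
  simpa using (this.const_mul (θ/2 * (1/δ + 1/(2-δ)))).const_add
    (θ/2 * (Real.log (2-δ) - Real.log δ))

lemma linlHasDeriv (θ δ : ℝ) (r : ℝ) :
    HasDerivAt (fun r => θ/2 * (Real.log δ - Real.log (2-δ))
        + θ/2 * (1/δ + 1/(2-δ)) * (r + (1-δ)))
      (θ/2 * (1/δ + 1/(2-δ))) r := by
  have : HasDerivAt (fun r : ℝ => r + (1-δ)) 1 r := by
    simpa using (hasDerivAt_id r).add_const (1-δ)
  simpa using (this.const_mul (θ/2 * (1/δ + 1/(2-δ)))).const_add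
    (θ/2 * (Real.log δ - Real.log (2-δ)))

lemma phival_right {r : ℝ} (h : 1 - δ ≤ r) :
    philogδ θ δ r = θ/2 * (Real.log (2-δ) - Real.log δ)
      + θ/2 * (1/δ + 1/(2-δ)) * (r - (1-δ)) := by
  simp only [philogδ, if_pos h]

lemma phival_left (hδ1 : δ < 1) {r : ℝ} (h : r ≤ -(1-δ)) :
    philogδ θ δ r = θ/2 * (Real.log δ - Real.log (2-δ))
      + θ/2 * (1/δ + 1/(2-δ)) * (r + (1-δ)) := by
  have : ¬ (1 - δ ≤ r) := by intro h'; linarith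
  simp only [philogδ, if_neg this, if_pos h]

lemma phival_mid (hδ0 : 0 < δ) (hδ1 : δ < 1) {r : ℝ} (h1 : -(1-δ) ≤ r) (h2 : r ≤ 1-δ) :
    philogδ θ δ r = θ/2 * (Real.log (1+r) - Real.log (1-r)) := by
  rcases eq_or_lt_of_le h2 with he | hlt
  · subst he
    rw [phival_right le_rfl, show (1:ℝ) + (1-δ) = 2 - δ by ring,
      show (1:ℝ) - (1-δ) = δ by ring]
    ring
  · rcases eq_or_lt_of_le h1 with he | hgt
    · rw [phival_left hδ1 he.ge, ← he, show (1:ℝ) + -(1-δ) = δ by ring,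
        show (1:ℝ) - -(1-δ) = 2 - δ by ring]
      ring
    · simp only [philogδ, if_neg (not_le.mpr hlt), if_neg (not_le.mpr hgt)]

lemma hasDerivAt_philog (hδ0 : 0 < δ) (hδ1 : δ < 1) (r : ℝ) :
    HasDerivAt (philogδ θ δ) (psilogδ θ δ r) r := by
  have h2δ : (0:ℝ) < 2 - δ := by linarith
  have hεpos : (0:ℝ) < 1 - δ := by linarith
  rcases lt_trichotomy r (1-δ) with hr1 | hr1 | hr1
  · rcases lt_trichotomy r (-(1-δ)) with hr2 | hr2 | hr2
    · rw [psival_left hδ1 hr2.le]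
      refine (linlHasDeriv θ δ r).congr_of_eventuallyEq ?_
      filter_upwards [Iio_mem_nhds hr2] with s hs
      exact phival_left hδ1 (le_of_lt hs)
    · subst hr2
      rw [psival_left hδ1 le_rfl]
      rw [← hasDerivWithinAt_univ, ← Iic_union_Ici (a := -(1-δ))]
      apply HasDerivWithinAt.union
      · refine ((linlHasDeriv θ δ _).hasDerivWithinAt).congr_of_eventuallyEq ?_
          (phival_left hδ1 le_rfl)
        filter_upwards [self_mem_nhdsWithin] with s hs
        exact phival_left hδ1 hs
      · have hd := (midphiHasDeriv θ (r := -(1-δ)) (by linarith) (by linarith)).hasDerivWithinAt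
          (s := Ici (-(1-δ)))
        have heq : θ/2 * (1/(1 + -(1-δ)) + 1/(1 - -(1-δ))) = θ/2 * (1/δ + 1/(2-δ)) := by
          rw [show (1:ℝ) + -(1-δ) = δ by ring, show (1:ℝ) - -(1-δ) = 2 - δ by ring]
        rw [heq] at hd
        refine hd.congr_of_eventuallyEq ?_ (phival_mid hδ0 hδ1 le_rfl (by linarith))
        filter_upwards [self_mem_nhdsWithin,
          eventually_nhdsWithin_of_eventually_nhds
            (eventually_lt_nhds (by linarith : -(1-δ) < 1-δ))] with s hs1 hs2
        exact phival_mid hδ0 hδ1 hs1 hs2.le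
    · rw [psival_mid hr2.le hr1.le]
      refine (midphiHasDeriv θ (by linarith) (by linarith)).congr_of_eventuallyEq ?_
      filter_upwards [Ioo_mem_nhds hr2 hr1] with s hs
      exact phival_mid hδ0 hδ1 hs.1.le hs.2.le
  · subst hr1
    rw [psival_right hδ1 le_rfl]
    rw [← hasDerivWithinAt_univ, ← Iic_union_Ici (a := (1-δ))]
    apply HasDerivWithinAt.union
    · have hd := (midphiHasDeriv θ (r := 1-δ) (by linarith) (by linarith)).hasDerivWithinAt
        (s := Iic (1-δ))
      have heq : θ/2 * (1/(1 + (1-δ)) + 1/(1 - (1-δ))) = θ/2 * (1/δ + 1/(2-δ)) := by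
        rw [show (1:ℝ) + (1-δ) = 2 - δ by ring, show (1:ℝ) - (1-δ) = δ by ring]
        ring
      rw [heq] at hd
      refine hd.congr_of_eventuallyEq ?_ (phival_mid hδ0 hδ1 (by linarith) le_rfl)
      filter_upwards [self_mem_nhdsWithin,
        eventually_nhdsWithin_of_eventually_nhds
          (eventually_gt_nhds (by linarith : -(1-δ) < 1-δ))] with s hs1 hs2
      exact phival_mid hδ0 hδ1 hs2.le hs1
    · refine ((linrHasDeriv θ δ _).hasDerivWithinAt).congr_of_eventuallyEq ?_
        (phival_right le_rfl)
      filter_upwards [self_mem_nhdsWithin] with s hs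
      exact phival_right hs
  · rw [psival_right hδ1 hr1.le]
    refine (linrHasDeriv θ δ r).congr_of_eventuallyEq ?_
    filter_upwards [Ioi_mem_nhds hr1] with s hs
    exact phival_right (le_of_lt hs)

lemma psilog_continuous (hδ0 : 0 < δ) (hδ1 : δ < 1) : Continuous (psilogδ θ δ) := by
  have hg : Continuous (fun r : ℝ => max (-(1-δ)) (min (1-δ) r)) :=
    continuous_const.max (continuous_const.min continuous_id)
  have hga : ∀ r : ℝ, -(1-δ) ≤ max (-(1-δ)) (min (1-δ) r) := fun r => le_max_left _ _
  have hgb : ∀ r : ℝ, max (-(1-δ)) (min (1-δ) r) ≤ 1-δ := fun r =>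
    max_le (by linarith) (min_le_left _ _)
  unfold psilogδ
  refine continuous_const.mul (Continuous.add ?_ ?_)
  · exact continuous_const.div (continuous_const.add hg)
      (fun r => ne_of_gt (by nlinarith [hga r]))
  · exact continuous_const.div (continuous_const.sub hg)
      (fun r => ne_of_gt (by nlinarith [hgb r]))

lemma psilog_nonneg (hθ : 0 < θ) (hδ0 : 0 < δ) (hδ1 : δ < 1) (r : ℝ) :
    0 ≤ psilogδ θ δ r := by
  have hga : -(1-δ) ≤ max (-(1-δ)) (min (1-δ) r) := le_max_left _ _
  have hgb : max (-(1-δ)) (min (1-δ) r) ≤ 1-δ := max_le (by linarith) (min_le_left _ _)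
  have h1 : (0:ℝ) < 1 + max (-(1-δ)) (min (1-δ) r) := by linarith
  have h2 : (0:ℝ) < 1 - max (-(1-δ)) (min (1-δ) r) := by linarith
  unfold psilogδ
  have := one_div_pos.mpr h1
  have := one_div_pos.mpr h2
  positivity

lemma psilog_le (hθ : 0 < θ) (hδ0 : 0 < δ) (hδ1 : δ < 1) (r : ℝ) :
    psilogδ θ δ r ≤ θ/2 * (1/δ + 1/(2-δ)) := by
  have h2δ : (0:ℝ) < 2 - δ := by linarith
  set g := max (-(1-δ)) (min (1-δ) r) with hgdef
  have hga : -(1-δ) ≤ g := le_max_left _ _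
  have hgb : g ≤ 1-δ := max_le (by linarith) (min_le_left _ _)
  have h1 : (0:ℝ) < 1 + g := by linarith
  have h2 : (0:ℝ) < 1 - g := by linarith
  unfold psilogδ
  rw [← hgdef]
  apply mul_le_mul_of_nonneg_left _ (by positivity : (0:ℝ) ≤ θ/2)
  rw [div_add_div _ _ h1.ne' h2.ne', div_add_div _ _ hδ0.ne' h2δ.ne',
    div_le_div_iff₀ (by positivity) (by positivity)]
  nlinarith [mul_nonneg (by linarith : (0:ℝ) ≤ 1 + g - δ) (by linarith : (0:ℝ) ≤ 1 - g - δ)]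
end aux

/-- `F_δ^log` is `C²`, with `0 ≤ (F_δ^log)'' ≤ (θ/2)(1/δ + 1/(2−δ))`; in particular it
is convex and its derivative `φ_δ` is Lipschitz with that constant; moreover
`F_δ^log ≥ 0`. -/
theorem Flogδ_regularity_convexity_nonneg
    (θ δ : ℝ) (hθ : 0 < θ) (hδ : δ ∈ Set.Ioo (0:ℝ) 1) :
    ContDiff ℝ 2 (Flogδ θ δ) ∧
    (∀ r : ℝ, 0 ≤ deriv (deriv (Flogδ θ δ)) r ∧
      deriv (deriv (Flogδ θ δ)) r ≤ (θ/2) * (1/δ + 1/(2-δ))) ∧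
    ConvexOn ℝ Set.univ (Flogδ θ δ) ∧
    LipschitzWith ((θ/2) * (1/δ + 1/(2-δ))).toNNReal (deriv (Flogδ θ δ)) ∧
    (∀ r : ℝ, 0 ≤ Flogδ θ δ r) := by
  obtain ⟨hδ0, hδ1⟩ := hδ
  have h2δ : (0:ℝ) < 2 - δ := by linarith
  have hεpos : (0:ℝ) < 1 - δ := by linarith
  have hdF : ∀ r, HasDerivAt (Flogδ θ δ) (philogδ θ δ r) r := hasDerivAt_Flog hδ0 hδ1
  have hdφ : ∀ r, HasDerivAt (philogδ θ δ) (psilogδ θ δ r) r := hasDerivAt_philog hδ0 hδ1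
  have hF' : deriv (Flogδ θ δ) = philogδ θ δ := funext fun r => (hdF r).deriv
  have hφ' : deriv (philogδ θ δ) = psilogδ θ δ := funext fun r => (hdφ r).deriv
  have hdiffF : Differentiable ℝ (Flogδ θ δ) := fun r => (hdF r).differentiableAt
  have hdiffφ : Differentiable ℝ (philogδ θ δ) := fun r => (hdφ r).differentiableAt
  have hcψ : Continuous (psilogδ θ δ) := psilog_continuous hδ0 hδ1
  have hdd : deriv (deriv (Flogδ θ δ)) = psilogδ θ δ := by rw [hF', hφ']
  have hbnd : (0:ℝ) ≤ θ/2 * (1/δ + 1/(2-δ)) := by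
    have := one_div_pos.mpr hδ0
    have := one_div_pos.mpr h2δ
    positivity
  refine ⟨?_, ?_, ?_, ?_, ?_⟩
  · rw [show (2 : WithTop ℕ∞) = 1 + 1 by norm_num]
    refine contDiff_succ_iff_deriv.mpr ⟨hdiffF, by simp, ?_⟩
    rw [hF']
    exact contDiff_one_iff_deriv.mpr ⟨hdiffφ, by rw [hφ']; exact hcψ⟩
  · intro r
    rw [hdd]
    exact ⟨psilog_nonneg hθ hδ0 hδ1 r, psilog_le hθ hδ0 hδ1 r⟩
  · refine convexOn_of_deriv2_nonneg convex_univ hdiffF.continuous.continuousOn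
      hdiffF.differentiableOn (by rw [hF']; exact hdiffφ.differentiableOn) ?_
    intro x _
    have : deriv^[2] (Flogδ θ δ) = deriv (deriv (Flogδ θ δ)) := rfl
    rw [this, hdd]
    exact psilog_nonneg hθ hδ0 hδ1 x
  · rw [hF']
    refine lipschitzWith_of_nnnorm_deriv_le hdiffφ ?_
    intro x
    rw [hφ', ← NNReal.coe_le_coe, coe_nnnorm, Real.coe_toNNReal _ hbnd, Real.norm_eq_abs,
      abs_of_nonneg (psilog_nonneg hθ hδ0 hδ1 x)]
    exact psilog_le hθ hδ0 hδ1 x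
  · have hφ0 : philogδ θ δ 0 = 0 := by
      have hna : ¬ (1 - δ ≤ (0:ℝ)) := by linarith
      have hnb : ¬ ((0:ℝ) ≤ -(1-δ)) := by linarith
      unfold philogδ
      rw [if_neg hna, if_neg hnb]
      simp
    have hF0 : Flogδ θ δ 0 = 0 := by
      have hna : ¬ (1 - δ ≤ (0:ℝ)) := by linarith
      have hnb : ¬ ((0:ℝ) ≤ -(1-δ)) := by linarith
      unfold Flogδ
      rw [if_neg hna, if_neg hnb]
      simp
    have hφmono : Monotone (philogδ θ δ) :=
      monotone_of_deriv_nonneg hdiffφ fun x => by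
        rw [hφ']; exact psilog_nonneg hθ hδ0 hδ1 x
    intro r
    rcases le_total 0 r with hr | hr
    · have hmono : MonotoneOn (Flogδ θ δ) (Ici 0) := by
        refine monotoneOn_of_deriv_nonneg (convex_Ici 0) hdiffF.continuous.continuousOn
          hdiffF.differentiableOn ?_
        intro x hx
        rw [interior_Ici] at hx
        rw [hF']
        have := hφmono (le_of_lt hx)
        rwa [hφ0] at this
      have := hmono (self_mem_Ici) hr hr
      rwa [hF0] at this
    · have hanti : AntitoneOn (Flogδ θ δ) (Iic 0) := by
        refine antitoneOn_of_deriv_nonpos (convex_Iic 0) hdiffF.continuous.continuousOn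
          hdiffF.differentiableOn ?_
        intro x hx
        rw [interior_Iic] at hx
        rw [hF']
        have := hφmono (le_of_lt hx)
        rwa [hφ0] at this
      have := hanti hr (self_mem_Iic) hr
      rwa [hF0] at this
end aux
end

section
/- For every θ > 0, δ ∈ (0,1), and r ∈ [−1,1], one has F_δ^log(r) ≤ F^log(r). -/
open Real Set


lemma mono_aux (f f' : ℝ → ℝ) (a b : ℝ) (hab : a ≤ b)
    (hd : ∀ x ∈ Set.Icc a b, HasDerivAt f (f' x) x)
    (hf' : ∀ x ∈ Set.Icc a b, 0 ≤ f' x) : f a ≤ f b := by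
  have hmono := monotoneOn_of_deriv_nonneg (convex_Icc a b)
    (fun x hx => (hd x hx).continuousAt.continuousWithinAt)
    (fun x hx => ((hd x (interior_subset hx)).differentiableAt).differentiableWithinAt)
    (fun x hx => by
      rw [(hd x (interior_subset hx)).deriv]; exact hf' x (interior_subset hx))
  exact hmono (Set.left_mem_Icc.mpr hab) (Set.right_mem_Icc.mpr hab) hab

lemma key1 (u : ℝ) (h0 : 0 ≤ u) (h1 : u < 1) : u + u^2/2 ≤ -Real.log (1-u) := by
  have H := mono_aux (fun x => -Real.log (1-x) - x - x^2/2)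
      (fun x => -((1-x)⁻¹ * (-1)) - 1 - 2*x^(2-1)/2) 0 u h0
    (by
      intro x hx
      have hne : (1:ℝ) - x ≠ 0 := by
        have := hx.2; have : x < 1 := lt_of_le_of_lt hx.2 h1; linarith
      have h1' : HasDerivAt (fun y : ℝ => 1 - y) (-1) x := (hasDerivAt_id x).const_sub 1
      have h2 : HasDerivAt (fun y : ℝ => Real.log (1-y)) ((1-x)⁻¹ * (-1)) x :=
        (Real.hasDerivAt_log hne).comp x h1'
      exact (h2.neg.sub (hasDerivAt_id x)).sub ((hasDerivAt_pow 2 x).div_const 2))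
    (by
      intro x hx
      have hxlt : x < 1 := lt_of_le_of_lt hx.2 h1
      have hpos : (0:ℝ) < 1 - x := by linarith
      have hx0 : 0 ≤ x := hx.1
      have e : -((1-x)⁻¹ * (-1)) - 1 - 2*x^(2-1)/2 = x^2/(1-x) := by
        field_simp; ring
      simp only [e]; positivity)
  norm_num at H
  linarith

lemma L1 (u : ℝ) (h0 : 0 ≤ u) (h1 : u < 1) :
    -u + u^2/2 + u^3/6 ≤ (1-u) * Real.log (1-u) := by
  have H := mono_aux (fun x => (1-x) * Real.log (1-x) + x - x^2/2 - x^3/6)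
      (fun x => ((-1) * Real.log (1-x) + (1-x) * ((1-x)⁻¹ * (-1))) + 1
        - 2*x^(2-1)/2 - 3*x^(3-1)/6) 0 u h0
    (by
      intro x hx
      have hne : (1:ℝ) - x ≠ 0 := by
        have : x < 1 := lt_of_le_of_lt hx.2 h1; linarith
      have h1' : HasDerivAt (fun y : ℝ => 1 - y) (-1) x := (hasDerivAt_id x).const_sub 1
      have h2 : HasDerivAt (fun y : ℝ => Real.log (1-y)) ((1-x)⁻¹ * (-1)) x :=
        (Real.hasDerivAt_log hne).comp x h1'
      exact (((h1'.mul h2).add (hasDerivAt_id x)).sub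
        ((hasDerivAt_pow 2 x).div_const 2)).sub ((hasDerivAt_pow 3 x).div_const 6))
    (by
      intro x hx
      have hxlt : x < 1 := lt_of_le_of_lt hx.2 h1
      have hne : (1:ℝ) - x ≠ 0 := by linarith
      have hk := key1 x hx.1 hxlt
      have e : (1-x) * ((1-x)⁻¹ * (-1)) = -1 := by field_simp
      simp only [e]
      have : ((-1) * Real.log (1-x) + (-1)) + 1 - 2*x^(2-1)/2 - 3*x^(3-1)/6
          = -Real.log (1-x) - x - x^2/2 := by ring
      rw [this]; linarith)
  norm_num at H
  linarith

lemma key2 (s : ℝ) (h0 : 0 ≤ s) : s - s^2/2 ≤ Real.log (1+s) := by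
  have H := mono_aux (fun x => Real.log (1+x) - x + x^2/2)
      (fun x => (1+x)⁻¹ * 1 - 1 + 2*x^(2-1)/2) 0 s h0
    (by
      intro x hx
      have hne : (1:ℝ) + x ≠ 0 := by have := hx.1; positivity
      have h1' : HasDerivAt (fun y : ℝ => 1 + y) 1 x := (hasDerivAt_id x).const_add 1
      have h2 : HasDerivAt (fun y : ℝ => Real.log (1+y)) ((1+x)⁻¹ * 1) x :=
        (Real.hasDerivAt_log hne).comp x h1'
      exact (h2.sub (hasDerivAt_id x)).add ((hasDerivAt_pow 2 x).div_const 2))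
    (by
      intro x hx
      have hpos : (0:ℝ) < 1 + x := by have := hx.1; linarith
      have hx0 : 0 ≤ x := hx.1
      have e : (1+x)⁻¹ * 1 - 1 + 2*x^(2-1)/2 = x^2/(1+x) := by
        field_simp; ring
      simp only [e]; positivity)
  norm_num at H
  linarith

lemma L2 (s : ℝ) (h0 : 0 ≤ s) :
    s + s^2/2 - s^3/6 ≤ (1+s) * Real.log (1+s) := by
  have H := mono_aux (fun x => (1+x) * Real.log (1+x) - x - x^2/2 + x^3/6)
      (fun x => (1 * Real.log (1+x) + (1+x) * ((1+x)⁻¹ * 1)) - 1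
        - 2*x^(2-1)/2 + 3*x^(3-1)/6) 0 s h0
    (by
      intro x hx
      have hne : (1:ℝ) + x ≠ 0 := by have := hx.1; positivity
      have h1' : HasDerivAt (fun y : ℝ => 1 + y) 1 x := (hasDerivAt_id x).const_add 1
      have h2 : HasDerivAt (fun y : ℝ => Real.log (1+y)) ((1+x)⁻¹ * 1) x :=
        (Real.hasDerivAt_log hne).comp x h1'
      exact (((h1'.mul h2).sub (hasDerivAt_id x)).sub
        ((hasDerivAt_pow 2 x).div_const 2)).add ((hasDerivAt_pow 3 x).div_const 6))
    (by
      intro x hx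
      have hpos : (0:ℝ) < 1 + x := by have := hx.1; linarith
      have hne : (1:ℝ) + x ≠ 0 := ne_of_gt hpos
      have hk := key2 x hx.1
      have e : (1+x) * ((1+x)⁻¹ * 1) = 1 := by field_simp
      simp only [e]
      have : (1 * Real.log (1+x) + 1) - 1 - 2*x^(2-1)/2 + 3*x^(3-1)/6
          = Real.log (1+x) - x + x^2/2 := by ring
      rw [this]; linarith)
  norm_num at H
  linarith

lemma L1' (δ t : ℝ) (hδ : 0 < δ) (ht0 : 0 ≤ t) (htδ : t ≤ δ) :
    -t + t^2/(2*δ) + t^3/(6*δ^2) ≤ (δ-t) * Real.log (δ-t) - (δ-t) * Real.log δ := by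
  rcases eq_or_lt_of_le htδ with heq | hlt
  · subst heq
    have e1 : t^2/(2*t) = t/2 := by
      rcases eq_or_lt_of_le ht0 with h | h
      · simp [← h]
      · field_simp
    have e2 : t^3/(6*t^2) = t/6 := by
      rcases eq_or_lt_of_le ht0 with h | h
      · simp [← h]
      · field_simp
    simp only [sub_self, zero_mul, e1, e2]
    linarith
  · have hu0 : 0 ≤ t/δ := div_nonneg ht0 hδ.le
    have hu1 : t/δ < 1 := (div_lt_one hδ).mpr hlt
    have hL := L1 (t/δ) hu0 hu1
    have hδne : δ ≠ 0 := hδ.ne'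
    have hdtpos : 0 < δ - t := by linarith
    have e1 : (1:ℝ) - t/δ = (δ-t)/δ := by field_simp
    rw [e1] at hL
    have H := mul_le_mul_of_nonneg_left hL hδ.le
    have eR : δ * ((δ-t)/δ * Real.log ((δ-t)/δ))
        = (δ-t) * Real.log (δ-t) - (δ-t) * Real.log δ := by
      rw [Real.log_div hdtpos.ne' hδne]; field_simp
    have eL : δ * (-(t/δ) + (t/δ)^2/2 + (t/δ)^3/6)
        = -t + t^2/(2*δ) + t^3/(6*δ^2) := by field_simp
    linarith

lemma L2' (x t : ℝ) (hx : 0 < x) (ht0 : 0 ≤ t) :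
    t + t^2/(2*x) - t^3/(6*x^2) ≤ (x+t) * Real.log (x+t) - (x+t) * Real.log x := by
  have hs0 : 0 ≤ t/x := div_nonneg ht0 hx.le
  have hL := L2 (t/x) hs0
  have hxne : x ≠ 0 := hx.ne'
  have hxtpos : 0 < x + t := by linarith
  have e1 : (1:ℝ) + t/x = (x+t)/x := by field_simp
  rw [e1] at hL
  have H := mul_le_mul_of_nonneg_left hL hx.le
  have eR : x * ((x+t)/x * Real.log ((x+t)/x))
      = (x+t) * Real.log (x+t) - (x+t) * Real.log x := by
    rw [Real.log_div hxtpos.ne' hxne]; field_simp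
  have eL : x * (t/x + (t/x)^2/2 - (t/x)^3/6)
      = t + t^2/(2*x) - t^3/(6*x^2) := by field_simp
  linarith

lemma core (δ r : ℝ) (hδ0 : 0 < δ) (hδ1 : δ < 1) (hr : 1 - δ ≤ r) (hr1 : r ≤ 1) :
    (1-r) * Real.log δ + (1+r) * Real.log (2-δ)
      + (1-r)^2/(2*δ) + (1+r)^2/(2*(2-δ)) - 1
      ≤ (1+r) * Real.log (1+r) + (1-r) * Real.log (1-r) := by
  have hx : (0:ℝ) < 2 - δ := by linarith
  have ht0 : (0:ℝ) ≤ r - 1 + δ := by linarith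
  have hA := L1' δ (r-1+δ) hδ0 ht0 (by linarith)
  rw [show δ - (r-1+δ) = 1 - r from by ring] at hA
  have hB := L2' (2-δ) (r-1+δ) hx ht0
  rw [show 2 - δ + (r-1+δ) = 1 + r from by ring] at hB
  have e2 : (1-r)^2/(2*δ) = δ/2 - (r-1+δ) + (r-1+δ)^2/(2*δ) := by
    field_simp; ring
  have e3 : (1+r)^2/(2*(2-δ)) = (2-δ)/2 + (r-1+δ) + (r-1+δ)^2/(2*(2-δ)) := by
    field_simp; ring
  have e4 : (r-1+δ)^3/(6*(2-δ)^2) ≤ (r-1+δ)^3/(6*δ^2) := by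
    apply div_le_div_of_nonneg_left (by positivity) (by positivity)
    nlinarith
  linarith

/-- The logarithmic potential `F^log` at temperature `θ`; since `Real.log 0 = 0`,
this formula agrees on `[−1,1]` with the continuous extension satisfying
`F^log(±1) = θ log 2`. -/
noncomputable def Flog (θ : ℝ) (r : ℝ) : ℝ :=
  (θ/2) * ((1+r) * Real.log (1+r) + (1-r) * Real.log (1-r))

/-- On `[−1,1]`, the regularized logarithmic potential lies below the logarithmic
potential: `F_δ^log(r) ≤ F^log(r)`. -/
theorem Flogδ_le_Flog (θ δ : ℝ) (hθ : 0 < θ) (hδ : δ ∈ Set.Ioo (0:ℝ) 1) :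
    ∀ r ∈ Set.Icc (-1:ℝ) 1, Flogδ θ δ r ≤ Flog θ r := by
  obtain ⟨hδ0, hδ1⟩ := hδ
  intro r hr
  obtain ⟨hr1, hr2⟩ := hr
  have hθ2 : (0:ℝ) ≤ θ/2 := by positivity
  unfold Flogδ Flog
  split_ifs with h1 h2
  · exact mul_le_mul_of_nonneg_left (core δ r hδ0 hδ1 h1 hr2) hθ2
  · have hc := core δ (-r) hδ0 hδ1 (by linarith) (by linarith)
    rw [show (1:ℝ) - -r = 1 + r from by ring,
      show (1:ℝ) + -r = 1 - r from by ring] at hc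
    have H := mul_le_mul_of_nonneg_left hc hθ2
    linarith
  · exact le_rfl
end

section
/- For every θ ∈ (0,1], δ ∈ (0,1), and r ∈ ℝ: r·φ_δ(r) ≥ 0 and |φ_δ(r)| ≤ r·φ_δ(r) + 1. -/
open Real Set

/-- Derivative of the right-branch formula. -/
lemma hasDerivAt_fRaux (θ δ : ℝ) (hδ0 : (0:ℝ) < δ) (hδ1 : δ < 1) (x : ℝ) :
    HasDerivAt (fun r => (θ/2) * ((1-r) * Real.log δ + (1+r) * Real.log (2-δ)
      + (1-r)^2/(2*δ) + (1+r)^2/(2*(2-δ)) - 1))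
      ((θ/2) * (Real.log (2-δ) - Real.log δ - (1-x)/δ + (1+x)/(2-δ))) x := by
  have h1 : HasDerivAt (fun r : ℝ => 1 - r) (-1) x := by
    simpa using (hasDerivAt_id x).const_sub 1
  have h2 : HasDerivAt (fun r : ℝ => 1 + r) 1 x := by
    simpa using (hasDerivAt_id x).const_add 1
  have h := (((((h1.mul_const (Real.log δ)).add (h2.mul_const (Real.log (2-δ)))).add
      ((h1.pow 2).div_const (2*δ))).add ((h2.pow 2).div_const (2*(2-δ)))).sub_const
      1).const_mul (θ/2)
  refine h.congr_deriv ?_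
  have hδ' : (2:ℝ) - δ ≠ 0 := by linarith
  field_simp
  ring

/-- Derivative of the middle-branch formula. -/
lemma hasDerivAt_fMaux (θ : ℝ) {x : ℝ} (hx1 : -1 < x) (hx2 : x < 1) :
    HasDerivAt (fun r => (θ/2) * ((1+r) * Real.log (1+r) + (1-r) * Real.log (1-r)))
      ((θ/2) * (Real.log (1+x) - Real.log (1-x))) x := by
  have h1 : HasDerivAt (fun r : ℝ => 1 - r) (-1) x := by
    simpa using (hasDerivAt_id x).const_sub 1
  have h2 : HasDerivAt (fun r : ℝ => 1 + r) 1 x := by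
    simpa using (hasDerivAt_id x).const_add 1
  have hp : (0:ℝ) < 1 + x := by linarith
  have hm : (0:ℝ) < 1 - x := by linarith
  have h := ((h2.mul (h2.log hp.ne')).add (h1.mul (h1.log hm.ne'))).const_mul (θ/2)
  refine h.congr_deriv ?_
  field_simp
  ring

/-- Derivative of `Flogδ` on the closed right region. -/
lemma hasDerivAt_Flogδ_right (θ : ℝ) {δ : ℝ} (hδ0 : (0:ℝ) < δ) (hδ1 : δ < 1) {x : ℝ}
    (hx : 1 - δ ≤ x) :
    HasDerivAt (Flogδ θ δ)
      ((θ/2) * (Real.log (2-δ) - Real.log δ - (1-x)/δ + (1+x)/(2-δ))) x := by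
  have h2δ : (0:ℝ) < 2 - δ := by linarith
  rcases hx.lt_or_eq with hlt | heq
  · -- interior of the right region
    have hEq : Flogδ θ δ =ᶠ[nhds x]
        (fun r => (θ/2) * ((1-r) * Real.log δ + (1+r) * Real.log (2-δ)
          + (1-r)^2/(2*δ) + (1+r)^2/(2*(2-δ)) - 1)) := by
      filter_upwards [Ioi_mem_nhds hlt] with y hy
      have : 1 - δ ≤ y := le_of_lt hy
      simp only [Flogδ, if_pos this]
    exact (hasDerivAt_fRaux θ δ hδ0 hδ1 x).congr_of_eventuallyEq hEq
  · -- boundary point x = 1 - δ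
    subst heq
    have hval : Flogδ θ δ (1-δ)
        = (θ/2) * ((1+(1-δ)) * Real.log (1+(1-δ)) + (1-(1-δ)) * Real.log (1-(1-δ))) := by
      simp only [Flogδ, if_pos (le_refl (1-δ))]
      rw [show (1:ℝ) - (1-δ) = δ by ring, show (1:ℝ) + (1-δ) = 2-δ by ring]
      field_simp
      ring
    have hDL : HasDerivWithinAt (Flogδ θ δ)
        ((θ/2) * (Real.log (2-δ) - Real.log δ)) (Iic (1-δ)) (1-δ) := by
      have hM := ((hasDerivAt_fMaux θ (show -1 < 1-δ by linarith)
        (show (1:ℝ)-δ < 1 by linarith)).hasDerivWithinAt (s := Iic (1-δ)))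
      rw [show (1:ℝ) + (1-δ) = 2-δ by ring, show (1:ℝ) - (1-δ) = δ by ring] at hM
      refine hM.congr_of_eventuallyEq ?_ (by
        rw [hval, show (1:ℝ) - (1-δ) = δ by ring, show (1:ℝ) + (1-δ) = 2-δ by ring])
      have hmem : Ioi (-(1-δ)) ∩ Iic (1-δ) ∈ nhdsWithin (1-δ) (Iic (1-δ)) :=
        Filter.inter_mem
          (mem_nhdsWithin_of_mem_nhds (Ioi_mem_nhds (by linarith)))
          self_mem_nhdsWithin
      filter_upwards [hmem] with y hy
      rcases (mem_Iic.mp hy.2).lt_or_eq with hy2 | hy2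
      · simp only [Flogδ, if_neg (not_le.mpr hy2), if_neg (not_le.mpr (mem_Ioi.mp hy.1))]
      · rw [hy2, hval]
    have hDR : HasDerivWithinAt (Flogδ θ δ)
        ((θ/2) * (Real.log (2-δ) - Real.log δ)) (Ici (1-δ)) (1-δ) := by
      have hR := ((hasDerivAt_fRaux θ δ hδ0 hδ1 (1-δ)).hasDerivWithinAt (s := Ici (1-δ)))
      have hder : (θ/2) * (Real.log (2-δ) - Real.log δ - (1-(1-δ))/δ + (1+(1-δ))/(2-δ))
          = (θ/2) * (Real.log (2-δ) - Real.log δ) := by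
        rw [show (1:ℝ) - (1-δ) = δ by ring, show (1:ℝ) + (1-δ) = 2-δ by ring]
        field_simp
        ring
      rw [hder] at hR
      refine hR.congr_of_eventuallyEq ?_ (by simp only [Flogδ, if_pos (le_refl (1-δ))])
      filter_upwards [self_mem_nhdsWithin] with y hy
      simp only [Flogδ, if_pos (mem_Ici.mp hy)]
    have hU := hDL.union hDR
    rw [Iic_union_Ici] at hU
    have hD := hasDerivWithinAt_univ.mp hU
    have hder : (θ/2) * (Real.log (2-δ) - Real.log δ - (1-(1-δ))/δ + (1+(1-δ))/(2-δ))
        = (θ/2) * (Real.log (2-δ) - Real.log δ) := by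
      rw [show (1:ℝ) - (1-δ) = δ by ring, show (1:ℝ) + (1-δ) = 2-δ by ring]
      field_simp
      ring
    rw [hder]
    exact hD

set_option maxHeartbeats 1000000 in
/-- Sign and growth bounds for `φ_δ = (F_δ^log)'`: for all `r`, `r·φ_δ(r) ≥ 0` and
`|φ_δ(r)| ≤ r·φ_δ(r) + 1`. -/
theorem Flogδ_deriv_sign_and_growth
    (θ δ : ℝ) (hθ : θ ∈ Set.Ioc (0:ℝ) 1) (hδ : δ ∈ Set.Ioo (0:ℝ) 1) :
    ∀ r : ℝ, 0 ≤ r * deriv (Flogδ θ δ) r ∧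
      |deriv (Flogδ θ δ) r| ≤ r * deriv (Flogδ θ δ) r + 1 := by
  obtain ⟨hθ0, hθ1⟩ := hθ
  obtain ⟨hδ0, hδ1⟩ := hδ
  have h2δ : (0:ℝ) < 2 - δ := by linarith
  -- the function is even
  have heven : ∀ x : ℝ, Flogδ θ δ (-x) = Flogδ θ δ x := by
    intro x
    simp only [Flogδ]
    split_ifs with h1 h2 h3 h4 h5 h6 h7
    all_goals first
      | linarith
      | (rw [show (1:ℝ) - -x = 1 + x by ring, show (1:ℝ) + -x = 1 - x by ring]; try ring)
  -- main claim for nonnegative points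
  have key : ∀ r : ℝ, 0 ≤ r → (0 ≤ r * deriv (Flogδ θ δ) r ∧
      |deriv (Flogδ θ δ) r| ≤ r * deriv (Flogδ θ δ) r + 1) := by
    intro r hr
    rcases lt_or_ge r (1-δ) with hcase | hcase
    · -- middle region
      have hr1 : r < 1 := by linarith
      have hm : (0:ℝ) < 1 - r := by linarith
      have hp : (0:ℝ) < 1 + r := by linarith
      have hd : deriv (Flogδ θ δ) r = (θ/2) * (Real.log (1+r) - Real.log (1-r)) := by
        have hEq : Flogδ θ δ =ᶠ[nhds r]
            (fun s => (θ/2) * ((1+s) * Real.log (1+s) + (1-s) * Real.log (1-s))) := by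
          filter_upwards [Ioo_mem_nhds (show -(1-δ) < r by linarith) hcase] with y hy
          simp only [Flogδ, if_neg (not_le.mpr hy.2), if_neg (not_le.mpr hy.1)]
        exact ((hasDerivAt_fMaux θ (by linarith) hr1).congr_of_eventuallyEq hEq).deriv
      have hlog : Real.log (1-r) ≤ Real.log (1+r) :=
        Real.log_le_log hm (by linarith)
      have hφ : 0 ≤ (θ/2) * (Real.log (1+r) - Real.log (1-r)) := by
        apply mul_nonneg (by positivity); linarith
      rw [hd]
      refine ⟨mul_nonneg hr hφ, ?_⟩
      rw [abs_of_nonneg hφ]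
      -- growth bound
      have hlp : 0 ≤ Real.log (1+r) := Real.log_nonneg (by linarith)
      have hA : Real.log (1+r) ≤ r := by
        have := Real.log_le_sub_one_of_pos hp; linarith
      have hA' : (1-r) * Real.log (1+r) ≤ r := by nlinarith [mul_nonneg hr hlp]
      have hB' : (1-r) * (-Real.log (1-r)) ≤ r := by
        have hle := Real.one_sub_inv_le_log_of_pos hm
        have hinv : (1-r) * (1-r)⁻¹ = 1 := mul_inv_cancel₀ hm.ne'
        nlinarith [mul_le_mul_of_nonneg_left
          (show -Real.log (1-r) ≤ (1-r)⁻¹ - 1 by linarith) hm.le]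
      have hX : 0 ≤ Real.log (1+r) - Real.log (1-r) := by linarith
      nlinarith [mul_nonneg (mul_nonneg hm.le (show (0:ℝ) ≤ 1 - θ by linarith)) hX]
    · -- right region
      have hr0 : (0:ℝ) < r := by linarith
      have hd : deriv (Flogδ θ δ) r
          = (θ/2) * (Real.log (2-δ) - Real.log δ - (1-r)/δ + (1+r)/(2-δ)) :=
        (hasDerivAt_Flogδ_right θ hδ0 hδ1 hcase).deriv
      have hlogδ : Real.log δ ≤ 0 := Real.log_nonpos hδ0.le hδ1.le
      have hlog2 : 0 ≤ Real.log (2-δ) := Real.log_nonneg (by linarith)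
      have hu : (1-r)/δ ≤ 1 := by rw [div_le_one hδ0]; linarith
      have hv : 1 ≤ (1+r)/(2-δ) := by rw [le_div_iff₀ h2δ]; linarith
      have hφ : 0 ≤ (θ/2) * (Real.log (2-δ) - Real.log δ - (1-r)/δ + (1+r)/(2-δ)) := by
        apply mul_nonneg (by positivity); linarith
      rw [hd]
      refine ⟨mul_nonneg hr0.le hφ, ?_⟩
      rw [abs_of_nonneg hφ]
      rcases le_or_gt 1 r with hr1 | hr1
      · -- r ≥ 1 : (1-r)·φ ≤ 0
        nlinarith [mul_nonneg (show (0:ℝ) ≤ r - 1 by linarith) hφ]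
      · -- 1-δ ≤ r < 1
        have hs0 : (0:ℝ) < 1 - r := by linarith
        have hsδ : 1 - r ≤ δ := by linarith
        have hAlog : Real.log (2-δ) ≤ 1 - δ := by
          have := Real.log_le_sub_one_of_pos h2δ; linarith
        have hBlog : -Real.log δ ≤ δ⁻¹ - 1 := by
          have := Real.one_sub_inv_le_log_of_pos hδ0; linarith
        have p1 : (1-r) * Real.log (2-δ) ≤ 1 - r := by nlinarith
        have p2 : (1-r) * (-Real.log δ) ≤ (1-r)/δ - (1-r) := by
          have h := mul_le_mul_of_nonneg_left hBlog hs0.le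
          have : (1-r) * (δ⁻¹ - 1) = (1-r)/δ - (1-r) := by ring
          linarith [h.trans_eq this]
        have p3 : ((1-r)*r)/δ ≤ r := by
          rw [div_le_iff₀ hδ0]; nlinarith
        have e3 : (1-r)/δ - (1-r)^2/δ = ((1-r)*r)/δ := by ring
        have p4 : (1-r) * ((1+r)/(2-δ)) ≤ (1-r) * 2 := by
          have hq : (1+r)/(2-δ) ≤ 2 := by rw [div_le_iff₀ h2δ]; linarith
          exact mul_le_mul_of_nonneg_left hq hs0.le
        have hT : (1-r) * (Real.log (2-δ) - Real.log δ - (1-r)/δ + (1+r)/(2-δ)) ≤ 2 := by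
          nlinarith [p1, p2, p3, p4, e3]
        rcases le_or_gt (Real.log (2-δ) - Real.log δ - (1-r)/δ + (1+r)/(2-δ)) 0 with hX | hX
        · nlinarith [mul_nonneg hs0.le (show (0:ℝ) ≤ θ/2 by positivity), hX]
        · nlinarith [hT, mul_nonneg (mul_nonneg hs0.le
            (show (0:ℝ) ≤ 1 - θ by linarith)) hX.le]
  intro r
  rcases le_or_gt 0 r with h | h
  · exact key r h
  · have hodd : deriv (Flogδ θ δ) r = -(deriv (Flogδ θ δ) (-r)) := by
      conv_lhs => rw [show Flogδ θ δ = (fun x => Flogδ θ δ (-x)) from (funext heven).symm]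
      exact deriv_comp_neg (Flogδ θ δ) r
    obtain ⟨h1, h2⟩ := key (-r) (by linarith)
    constructor
    · rw [hodd, show r * -(deriv (Flogδ θ δ) (-r)) = (-r) * deriv (Flogδ θ δ) (-r) by ring]
      exact h1
    · rw [hodd, abs_neg,
        show r * -(deriv (Flogδ θ δ) (-r)) = (-r) * deriv (Flogδ θ δ) (-r) by ring]
      exact h2
end

section
/- Let θ > 0, let (δ_n) ⊂ (0,1) with δ_n → 0, and let (r_n) ⊂ ℝ with r_n → r. Then: (i) if |r| < 1, φ_{δ_n}(r_n) → φ(r) = (θ/2)·log((1+r)/(1−r)); (ii) if r ≥ 1, φ_{δ_n}(r_n) → +∞; (iii) if r ≤ −1, φ_{δ_n}(r_n) → −∞. -/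
open Real Set Filter Topology

noncomputable def fUp (θ δ r : ℝ) : ℝ :=
  (θ/2) * ((1-r) * Real.log δ + (1+r) * Real.log (2-δ)
      + (1-r)^2/(2*δ) + (1+r)^2/(2*(2-δ)) - 1)

noncomputable def fLo (θ δ r : ℝ) : ℝ :=
  (θ/2) * ((1+r) * Real.log δ + (1-r) * Real.log (2-δ)
      + (1+r)^2/(2*δ) + (1-r)^2/(2*(2-δ)) - 1)

noncomputable def fMid (θ r : ℝ) : ℝ :=
  (θ/2) * ((1+r) * Real.log (1+r) + (1-r) * Real.log (1-r))

noncomputable def phiUp (θ δ r : ℝ) : ℝ :=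
  (θ/2) * (Real.log (2-δ) - Real.log δ - (1-r)/δ + (1+r)/(2-δ))

noncomputable def phiLo (θ δ r : ℝ) : ℝ :=
  (θ/2) * (Real.log δ - Real.log (2-δ) + (1+r)/δ - (1-r)/(2-δ))

noncomputable def phiMid (θ r : ℝ) : ℝ :=
  (θ/2) * (Real.log (1+r) - Real.log (1-r))

noncomputable def phiδ (θ δ r : ℝ) : ℝ :=
  if 1 - δ ≤ r then phiUp θ δ r
  else if r ≤ -(1-δ) then phiLo θ δ r
  else phiMid θ r

lemma hasDerivAt_fUp (θ : ℝ) {δ : ℝ} (h0 : δ ≠ 0) (h2 : (2:ℝ) - δ ≠ 0) (r : ℝ) :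
    HasDerivAt (fUp θ δ) (phiUp θ δ r) r := by
  have h1 : HasDerivAt (fun x : ℝ => 1 - x) (-1) r := by
    simpa using (hasDerivAt_id r).const_sub 1
  have h1' : HasDerivAt (fun x : ℝ => 1 + x) 1 r := by
    simpa using (hasDerivAt_id r).const_add 1
  have H2 := (((((h1.mul_const (Real.log δ)).add (h1'.mul_const (Real.log (2-δ)))).add
      ((h1.pow 2).div_const (2*δ))).add ((h1'.pow 2).div_const (2*(2-δ)))).sub_const 1).const_mul (θ/2)
  refine H2.congr_deriv ?_
  simp only [phiUp]; field_simp; ring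

lemma hasDerivAt_fLo (θ : ℝ) {δ : ℝ} (h0 : δ ≠ 0) (h2 : (2:ℝ) - δ ≠ 0) (r : ℝ) :
    HasDerivAt (fLo θ δ) (phiLo θ δ r) r := by
  have h1 : HasDerivAt (fun x : ℝ => 1 - x) (-1) r := by
    simpa using (hasDerivAt_id r).const_sub 1
  have h1' : HasDerivAt (fun x : ℝ => 1 + x) 1 r := by
    simpa using (hasDerivAt_id r).const_add 1
  have H2 := (((((h1'.mul_const (Real.log δ)).add (h1.mul_const (Real.log (2-δ)))).add
      ((h1'.pow 2).div_const (2*δ))).add ((h1.pow 2).div_const (2*(2-δ)))).sub_const 1).const_mul (θ/2)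
  refine H2.congr_deriv ?_
  simp only [phiLo]; field_simp; ring

lemma hasDerivAt_fMid (θ : ℝ) {r : ℝ} (hm1 : -1 < r) (hp1 : r < 1) :
    HasDerivAt (fMid θ) (phiMid θ r) r := by
  have hp : (0:ℝ) < 1 + r := by linarith
  have hm : (0:ℝ) < 1 - r := by linarith
  have ha : HasDerivAt (fun x : ℝ => 1 + x) 1 r := by
    simpa using (hasDerivAt_id r).const_add 1
  have hb : HasDerivAt (fun x : ℝ => 1 - x) (-1) r := by
    simpa using (hasDerivAt_id r).const_sub 1
  have hla : HasDerivAt (fun x : ℝ => Real.log (1 + x)) ((1+r)⁻¹ * 1) r :=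
    (Real.hasDerivAt_log hp.ne').comp r ha
  have hlb : HasDerivAt (fun x : ℝ => Real.log (1 - x)) ((1-r)⁻¹ * (-1)) r :=
    (Real.hasDerivAt_log hm.ne').comp r hb
  have H := ((ha.mul hla).add (hb.mul hlb)).const_mul (θ/2)
  refine H.congr_deriv ?_
  simp only [phiMid]; field_simp; ring

lemma Flogδ_eq_fMid (θ : ℝ) {δ : ℝ} (hδ : δ ∈ Set.Ioo (0:ℝ) 1) {y : ℝ}
    (hy : y ∈ Set.Icc (-(1-δ)) (1-δ)) : Flogδ θ δ y = fMid θ y := by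
  obtain ⟨hδ0, hδ1⟩ := hδ
  obtain ⟨h1, h2⟩ := hy
  rcases eq_or_lt_of_le h2 with h2e | h2l
  · subst h2e
    rw [Flogδ, if_pos le_rfl, fMid,
      show (1:ℝ) - (1-δ) = δ by ring, show (1:ℝ) + (1-δ) = 2-δ by ring]
    have h2δ : (2:ℝ) - δ ≠ 0 := by linarith
    field_simp
    ring
  · rcases eq_or_lt_of_le h1 with h1e | h1l
    · rw [Flogδ, if_neg (not_le.mpr h2l), if_pos h1e.ge, fMid, ← h1e,
        show (1:ℝ) + -(1-δ) = δ by ring, show (1:ℝ) - -(1-δ) = 2-δ by ring]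
      have h2δ : (2:ℝ) - δ ≠ 0 := by linarith
      field_simp
      ring
    · rw [Flogδ, if_neg (not_le.mpr h2l), if_neg (not_le.mpr h1l), fMid]

lemma hasDerivAt_Flogδ (θ : ℝ) {δ : ℝ} (hδ : δ ∈ Set.Ioo (0:ℝ) 1) (r : ℝ) :
    HasDerivAt (Flogδ θ δ) (phiδ θ δ r) r := by
  obtain ⟨hδ0, hδ1⟩ := hδ
  have h2δ : (0:ℝ) < 2 - δ := by linarith
  have hlt : -(1-δ) < 1-δ := by linarith
  rcases lt_trichotomy r (1-δ) with hr1 | hr1 | hr1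
  · rcases lt_trichotomy r (-(1-δ)) with hr2 | hr2 | hr2
    · -- lower interior
      have hphi : phiδ θ δ r = phiLo θ δ r := by
        rw [phiδ, if_neg (not_le.mpr hr1), if_pos hr2.le]
      rw [hphi]
      refine (hasDerivAt_fLo θ hδ0.ne' h2δ.ne' r).congr_of_eventuallyEq ?_
      filter_upwards [Iio_mem_nhds hr2] with x hx
      have hx' : ¬ (1 - δ ≤ x) := by simp only [mem_Iio] at hx; push_neg; linarith
      rw [Flogδ, if_neg hx', if_pos (le_of_lt hx), fLo]
    · -- boundary r = -(1-δ)
      have hphi : phiδ θ δ r = phiLo θ δ r := by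
        rw [phiδ, if_neg (not_le.mpr hr1), if_pos hr2.le]
      have hmid : phiMid θ r = phiδ θ δ r := by
        rw [hphi, phiMid, phiLo, hr2, show (1:ℝ) + -(1-δ) = δ by ring,
          show (1:ℝ) - -(1-δ) = 2-δ by ring]
        field_simp
        ring
      have hA : HasDerivWithinAt (Flogδ θ δ) (phiδ θ δ r) (Set.Iic (-(1-δ))) r := by
        refine ((hasDerivAt_fLo θ hδ0.ne' h2δ.ne' r).hasDerivWithinAt.congr
          (fun y hy => ?_) ?_).congr_deriv hphi.symm
        · have hy' : ¬ (1 - δ ≤ y) := by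
            simp only [mem_Iic] at hy; push_neg; linarith
          rw [Flogδ, if_neg hy', if_pos (mem_Iic.mp hy), fLo]
        · rw [Flogδ, if_neg (not_le.mpr hr1), if_pos hr2.le, fLo]
      have hB : HasDerivWithinAt (Flogδ θ δ) (phiδ θ δ r) (Set.Icc (-(1-δ)) (1-δ)) r := by
        have hmem : r ∈ Set.Icc (-(1-δ)) (1-δ) := ⟨hr2.ge, hr1.le⟩
        refine ((hasDerivAt_fMid θ (by linarith) (by linarith)).hasDerivWithinAt.congr
          (fun y hy => Flogδ_eq_fMid θ ⟨hδ0, hδ1⟩ hy) (Flogδ_eq_fMid θ ⟨hδ0, hδ1⟩ hmem)).congr_deriv hmid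
      have hU := hA.union hB
      rw [Set.Iic_union_Icc_eq_Iic hlt.le] at hU
      exact hU.hasDerivAt (Iic_mem_nhds (by linarith))
    · -- middle interior
      have hphi : phiδ θ δ r = phiMid θ r := by
        rw [phiδ, if_neg (not_le.mpr hr1), if_neg (not_le.mpr hr2)]
      rw [hphi]
      refine (hasDerivAt_fMid θ (by linarith) (by linarith)).congr_of_eventuallyEq ?_
      filter_upwards [Ioo_mem_nhds hr2 hr1] with x hx
      rw [Flogδ, if_neg (not_le.mpr hx.2), if_neg (not_le.mpr hx.1), fMid]
  · -- boundary r = 1-δ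
    have hphi : phiδ θ δ r = phiUp θ δ r := by
      rw [phiδ, if_pos hr1.ge]
    have hmid : phiMid θ r = phiδ θ δ r := by
      rw [hphi, phiMid, phiUp, hr1, show (1:ℝ) - (1-δ) = δ by ring,
        show (1:ℝ) + (1-δ) = 2-δ by ring]
      field_simp
      ring
    have hA : HasDerivWithinAt (Flogδ θ δ) (phiδ θ δ r) (Set.Ici (1-δ)) r := by
      refine ((hasDerivAt_fUp θ hδ0.ne' h2δ.ne' r).hasDerivWithinAt.congr
        (fun y hy => ?_) ?_).congr_deriv hphi.symm
      · rw [Flogδ, if_pos (mem_Ici.mp hy), fUp]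
      · rw [Flogδ, if_pos hr1.ge, fUp]
    have hB : HasDerivWithinAt (Flogδ θ δ) (phiδ θ δ r) (Set.Icc (-(1-δ)) (1-δ)) r := by
      have hmem : r ∈ Set.Icc (-(1-δ)) (1-δ) := ⟨by linarith, hr1.le⟩
      refine ((hasDerivAt_fMid θ (by linarith) (by linarith)).hasDerivWithinAt.congr
        (fun y hy => Flogδ_eq_fMid θ ⟨hδ0, hδ1⟩ hy) (Flogδ_eq_fMid θ ⟨hδ0, hδ1⟩ hmem)).congr_deriv hmid
    have hU := hB.union hA
    rw [Set.Icc_union_Ici_eq_Ici hlt.le] at hU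
    exact hU.hasDerivAt (Ici_mem_nhds (by linarith))
  · -- upper interior
    have hphi : phiδ θ δ r = phiUp θ δ r := by
      rw [phiδ, if_pos hr1.le]
    rw [hphi]
    refine (hasDerivAt_fUp θ hδ0.ne' h2δ.ne' r).congr_of_eventuallyEq ?_
    filter_upwards [Ioi_mem_nhds hr1] with x hx
    rw [Flogδ, if_pos (le_of_lt hx), fUp]

lemma phiδ_neg (θ : ℝ) {δ : ℝ} (hδ1 : δ < 1) (x : ℝ) :
    phiδ θ δ (-x) = - phiδ θ δ x := by
  have h0 : (0:ℝ) < 1 - δ := by linarith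
  rcases le_or_gt (1-δ) x with h | h
  · rw [phiδ, if_neg (by push_neg; linarith), if_pos (by linarith),
      phiδ, if_pos h, phiLo, phiUp]
    ring
  · rcases le_or_gt x (-(1-δ)) with h2 | h2
    · rw [phiδ, if_pos (by linarith), phiδ, if_neg (not_le.mpr h), if_pos h2,
        phiUp, phiLo]
      ring
    · rw [phiδ, if_neg (by push_neg; linarith), if_neg (by push_neg; linarith),
        phiδ, if_neg (not_le.mpr h), if_neg (not_le.mpr h2), phiMid, phiMid]
      ring

lemma phiδ_tendsto_atTop (θ : ℝ) (hθ : 0 < θ)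
    (δ : ℕ → ℝ) (hδ : ∀ n, δ n ∈ Set.Ioo (0:ℝ) 1)
    (hδ0 : Tendsto δ atTop (𝓝 0))
    (r : ℕ → ℝ) (rlim : ℝ) (hr : Tendsto r atTop (𝓝 rlim)) (h1 : 1 ≤ rlim) :
    Tendsto (fun n => phiδ θ (δ n) (r n)) atTop atTop := by
  rw [tendsto_atTop]
  intro M
  set η : ℝ := min (1/2) (Real.exp (-(2*M/θ + 1))) with hηdef
  have hη0 : 0 < η := lt_min (by norm_num) (Real.exp_pos _)
  have hηhalf : η ≤ 1/2 := min_le_left _ _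
  have hlogη : Real.log η ≤ -(2*M/θ+1) := by
    calc Real.log η ≤ Real.log (Real.exp (-(2*M/θ + 1))) := by
          apply Real.log_le_log hη0 (min_le_right _ _)
      _ = -(2*M/θ+1) := Real.log_exp _
  have hδev : ∀ᶠ n in atTop, δ n < η := hδ0.eventually (gt_mem_nhds hη0)
  have hrev : ∀ᶠ n in atTop, 1 - η < r n := hr.eventually (lt_mem_nhds (by linarith))
  filter_upwards [hδev, hrev] with n hdn hrn
  obtain ⟨hd0, hd1⟩ := hδ n
  set d := δ n with hd
  set x := r n with hx
  have h2d : (0:ℝ) < 2 - d := by linarith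
  have hx0 : (1:ℝ)/2 < x := by linarith
  have hlogd : Real.log d ≤ -(2*M/θ+1) :=
    le_trans (le_of_lt (by apply Real.log_lt_log hd0 hdn)) hlogη
  have hθ2 : (0:ℝ) < θ/2 := by linarith
  by_cases hcase : 1 - d ≤ x
  · rw [phiδ, if_pos hcase, phiUp]
    have hA : (0:ℝ) ≤ Real.log (2-d) := Real.log_nonneg (by linarith)
    have hB : (1-x)/d ≤ 1 := (div_le_one hd0).mpr (by linarith)
    have hC : (0:ℝ) ≤ (1+x)/(2-d) := div_nonneg (by linarith) h2d.le
    have hkey : 2*M/θ ≤ Real.log (2-d) - Real.log d - (1-x)/d + (1+x)/(2-d) := by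
      linarith
    calc M = (θ/2) * (2*M/θ) := by field_simp
      _ ≤ _ := mul_le_mul_of_nonneg_left hkey hθ2.le
  · push_neg at hcase
    have hnotlo : ¬ x ≤ -(1-d) := by push_neg; linarith
    rw [phiδ, if_neg (not_le.mpr hcase), if_neg hnotlo, phiMid]
    have hx1 : x < 1 := by linarith
    have h1mx : 0 < 1 - x := by linarith
    have h1mx' : 1 - x < η := by linarith
    have hA : (0:ℝ) ≤ Real.log (1+x) := Real.log_nonneg (by linarith)
    have hB : Real.log (1-x) ≤ Real.log η := Real.log_le_log h1mx h1mx'.le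
    have hkey : 2*M/θ ≤ Real.log (1+x) - Real.log (1-x) := by linarith
    calc M = (θ/2) * (2*M/θ) := by field_simp
      _ ≤ _ := mul_le_mul_of_nonneg_left hkey hθ2.le

/-- Pointwise limit of `φ_{δ_n}(r_n)` as `δ_n → 0` and `r_n → r`: it converges to
`φ(r) = (θ/2)·log((1+r)/(1−r))` if `|r| < 1`, to `+∞` if `r ≥ 1`, and to `−∞` if
`r ≤ −1`. -/
theorem Flogδ_deriv_limit
    (θ : ℝ) (hθ : 0 < θ)
    (δ : ℕ → ℝ) (hδ : ∀ n, δ n ∈ Set.Ioo (0:ℝ) 1)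
    (hδ0 : Tendsto δ atTop (𝓝 0))
    (r : ℕ → ℝ) (rlim : ℝ) (hr : Tendsto r atTop (𝓝 rlim)) :
    (|rlim| < 1 →
      Tendsto (fun n => deriv (Flogδ θ (δ n)) (r n)) atTop
        (𝓝 ((θ/2) * Real.log ((1 + rlim)/(1 - rlim))))) ∧
    (1 ≤ rlim → Tendsto (fun n => deriv (Flogδ θ (δ n)) (r n)) atTop atTop) ∧
    (rlim ≤ -1 → Tendsto (fun n => deriv (Flogδ θ (δ n)) (r n)) atTop atBot) := by
  have hderiv : (fun n => deriv (Flogδ θ (δ n)) (r n)) = fun n => phiδ θ (δ n) (r n) := by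
    funext n; exact (hasDerivAt_Flogδ θ (hδ n) (r n)).deriv
  rw [hderiv]
  refine ⟨fun habs => ?_, fun h1 => phiδ_tendsto_atTop θ hθ δ hδ hδ0 r rlim hr h1,
    fun h1 => ?_⟩
  · -- |rlim| < 1
    have hp : (0:ℝ) < 1 + rlim := by cases abs_lt.mp habs; linarith
    have hm : (0:ℝ) < 1 - rlim := by cases abs_lt.mp habs; linarith
    set ε : ℝ := (1 - |rlim|)/2 with hε
    have hε0 : 0 < ε := by rw [hε]; linarith
    have hrev : ∀ᶠ n in atTop, |r n| < 1 - ε :=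
      (hr.abs).eventually (gt_mem_nhds (by rw [hε]; linarith [abs_nonneg rlim]))
    have hδev : ∀ᶠ n in atTop, δ n < ε := hδ0.eventually (gt_mem_nhds hε0)
    have hev : (fun n => phiδ θ (δ n) (r n)) =ᶠ[atTop] fun n => phiMid θ (r n) := by
      filter_upwards [hrev, hδev] with n hrn hdn
      have h1 := abs_lt.mp hrn
      rw [phiδ, if_neg (by push_neg; linarith), if_neg (by push_neg; linarith)]
    rw [tendsto_congr' hev]
    have t1 : Tendsto (fun n => Real.log (1 + r n)) atTop (𝓝 (Real.log (1+rlim))) :=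
      ((Real.continuousAt_log hp.ne').tendsto).comp (tendsto_const_nhds.add hr)
    have t2 : Tendsto (fun n => Real.log (1 - r n)) atTop (𝓝 (Real.log (1-rlim))) :=
      ((Real.continuousAt_log hm.ne').tendsto).comp (tendsto_const_nhds.sub hr)
    have := (t1.sub t2).const_mul (θ/2)
    rw [show Real.log ((1 + rlim)/(1 - rlim)) = Real.log (1+rlim) - Real.log (1-rlim) from
      Real.log_div hp.ne' hm.ne']
    exact this.congr (fun n => by rw [phiMid])
  · -- rlim ≤ -1
    have hs : Tendsto (fun n => -(r n)) atTop (𝓝 (-rlim)) := hr.neg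
    have h1' : (1:ℝ) ≤ -rlim := by linarith
    have H := phiδ_tendsto_atTop θ hθ δ hδ hδ0 (fun n => -(r n)) (-rlim) hs h1'
    have H2 : Tendsto (fun n => -(phiδ θ (δ n) (-(r n)))) atTop atBot :=
      tendsto_neg_atTop_atBot.comp H
    refine H2.congr (fun n => ?_)
    rw [phiδ_neg θ (hδ n).2]
    ring
end

section
/- Let θ > 0, K ≥ 0, and let (X, μ) be a finite measure space. There exist constants C₁, C₂ > 0, depending only on θ, K and μ(X), such that for every δ ∈ (0,1) and every measurable u : X → ℝ with ∫_X F_δ^log(u) dμ ≤ K, one has ∫_X max(u−1, 0) dμ + ∫_X max(−1−u, 0) dμ ≤ C₁/|log δ| + C₂·δ. -/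
open Real Set MeasureTheory

lemma flog_lower_right (θ δ r : ℝ) (hθ : 0 < θ) (hδ : 0 < δ) (hδ1 : δ < 1) (hr : 1 ≤ r) :
    θ/2 * ((r-1) * (-Real.log δ)) ≤ Flogδ θ δ r := by
  have h1 : 1 - δ ≤ r := by linarith
  rw [Flogδ, if_pos h1]
  apply mul_le_mul_of_nonneg_left _ (by positivity : (0:ℝ) ≤ θ/2)
  have hlog2 : 0 ≤ Real.log (2-δ) := Real.log_nonneg (by linarith)
  have h2 : (0:ℝ) ≤ (1+r) * Real.log (2-δ) := mul_nonneg (by linarith) hlog2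
  have h3 : (0:ℝ) ≤ (1-r)^2/(2*δ) := by positivity
  have h4 : (1:ℝ) ≤ (1+r)^2/(2*(2-δ)) := by
    rw [le_div_iff₀ (by linarith)]
    nlinarith
  linarith [h2, h3, h4]

lemma flog_lower_left (θ δ r : ℝ) (hθ : 0 < θ) (hδ : 0 < δ) (hδ1 : δ < 1) (hr : r ≤ -1) :
    θ/2 * ((-1-r) * (-Real.log δ)) ≤ Flogδ θ δ r := by
  have h1 : ¬ (1 - δ ≤ r) := by linarith
  have h2 : r ≤ -(1-δ) := by linarith
  rw [Flogδ, if_neg h1, if_pos h2]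
  apply mul_le_mul_of_nonneg_left _ (by positivity : (0:ℝ) ≤ θ/2)
  have hlog2 : 0 ≤ Real.log (2-δ) := Real.log_nonneg (by linarith)
  have h3 : (0:ℝ) ≤ (1-r) * Real.log (2-δ) := mul_nonneg (by linarith) hlog2
  have h4 : (0:ℝ) ≤ (1+r)^2/(2*δ) := by positivity
  have h5 : (1:ℝ) ≤ (1-r)^2/(2*(2-δ)) := by
    rw [le_div_iff₀ (by linarith)]
    nlinarith
  linarith [h3, h4, h5]

lemma flog_aux (θ L t : ℝ) (hθ : θ ≠ 0) (hL : L ≠ 0) :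
    2/(θ*L) * (θ/2 * (t * L)) = t := by
  field_simp

lemma flog_pointwise (θ δ r : ℝ) (hθ : 0 < θ) (hδ : 0 < δ) (hδ1 : δ < 1) :
    ENNReal.ofReal (max (r - 1) 0) + ENNReal.ofReal (max (-1 - r) 0)
      ≤ ENNReal.ofReal (2/(θ*|Real.log δ|)) * ENNReal.ofReal (Flogδ θ δ r) := by
  have hlogneg : Real.log δ < 0 := Real.log_neg hδ hδ1
  have habs : |Real.log δ| = -Real.log δ := abs_of_neg hlogneg
  have hlpos : 0 < |Real.log δ| := abs_pos.mpr hlogneg.ne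
  set c : ℝ := 2/(θ*|Real.log δ|) with hc
  have hcpos : 0 < c := by positivity
  rcases le_or_gt r 1 with h1 | h1
  · rcases le_or_gt (-1) r with h2 | h2
    · rw [max_eq_right (by linarith), max_eq_right (by linarith)]
      simp
    · -- r < -1
      rw [max_eq_right (by linarith : r - 1 ≤ 0), ENNReal.ofReal_zero, zero_add,
        ← ENNReal.ofReal_mul hcpos.le]
      apply ENNReal.ofReal_le_ofReal
      have := flog_lower_left θ δ r hθ hδ hδ1 h2.le
      have hkey : c * (θ/2 * ((-1-r) * (-Real.log δ))) = -1 - r := by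
        rw [hc, habs]; exact flog_aux θ (-Real.log δ) _ hθ.ne' (neg_ne_zero.mpr hlogneg.ne)
      calc max (-1-r) 0 = -1 - r := max_eq_left (by linarith)
        _ = c * (θ/2 * ((-1-r) * (-Real.log δ))) := hkey.symm
        _ ≤ c * Flogδ θ δ r := by
            apply mul_le_mul_of_nonneg_left this hcpos.le
  · -- r > 1
    rw [max_eq_right (by linarith : -1 - r ≤ 0), ENNReal.ofReal_zero, add_zero,
      ← ENNReal.ofReal_mul hcpos.le]
    apply ENNReal.ofReal_le_ofReal
    have := flog_lower_right θ δ r hθ hδ hδ1 h1.le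
    have hkey : c * (θ/2 * ((r-1) * (-Real.log δ))) = r - 1 := by
      rw [hc, habs]; exact flog_aux θ (-Real.log δ) _ hθ.ne' (neg_ne_zero.mpr hlogneg.ne)
    calc max (r-1) 0 = r - 1 := max_eq_left (by linarith)
      _ = c * (θ/2 * ((r-1) * (-Real.log δ))) := hkey.symm
      _ ≤ c * Flogδ θ δ r := mul_le_mul_of_nonneg_left this hcpos.le

/-- A uniform bound `K` on the regularized logarithmic energy forces the positive
parts of `u − 1` and `−1 − u` to be small in `L¹`, quantitatively in `δ`: there are
constants `C₁, C₂ > 0` depending only on `θ`, `K` and `μ(X)` such that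
`∫ [u−1]₊ + ∫ [−1−u]₊ ≤ C₁/|log δ| + C₂ δ`. -/
theorem log_energy_bound_forces_interval
    (θ K : ℝ) (hθ : 0 < θ) (hK : 0 ≤ K)
    {X : Type*} [MeasurableSpace X] (μ : Measure X) [IsFiniteMeasure μ] :
    ∃ C₁ > (0:ℝ), ∃ C₂ > (0:ℝ),
      ∀ δ ∈ Set.Ioo (0:ℝ) 1, ∀ u : X → ℝ, Measurable u →
        (∫⁻ x, ENNReal.ofReal (Flogδ θ δ (u x)) ∂μ) ≤ ENNReal.ofReal K →
        (∫⁻ x, ENNReal.ofReal (max (u x - 1) 0) ∂μ)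
          + (∫⁻ x, ENNReal.ofReal (max (-1 - u x) 0) ∂μ)
          ≤ ENNReal.ofReal (C₁ / |Real.log δ| + C₂ * δ) := by
  refine ⟨2*(K+1)/θ, by positivity, 1, by norm_num, ?_⟩
  rintro δ ⟨hδ0, hδ1⟩ u hu hint
  have hlogneg : Real.log δ < 0 := Real.log_neg hδ0 hδ1
  have hlpos : 0 < |Real.log δ| := abs_pos.mpr hlogneg.ne
  set c : ℝ := 2/(θ*|Real.log δ|) with hc
  have hcpos : 0 < c := by positivity
  have hf : Measurable fun x => ENNReal.ofReal (max (u x - 1) 0) :=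
    ((hu.sub measurable_const).max measurable_const).ennreal_ofReal
  calc (∫⁻ x, ENNReal.ofReal (max (u x - 1) 0) ∂μ)
        + (∫⁻ x, ENNReal.ofReal (max (-1 - u x) 0) ∂μ)
      = ∫⁻ x, ENNReal.ofReal (max (u x - 1) 0) + ENNReal.ofReal (max (-1 - u x) 0) ∂μ :=
        (lintegral_add_left hf _).symm
    _ ≤ ∫⁻ x, ENNReal.ofReal c * ENNReal.ofReal (Flogδ θ δ (u x)) ∂μ :=
        lintegral_mono fun x => flog_pointwise θ δ (u x) hθ hδ0 hδ1
    _ = ENNReal.ofReal c * ∫⁻ x, ENNReal.ofReal (Flogδ θ δ (u x)) ∂μ :=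
        lintegral_const_mul' _ _ ENNReal.ofReal_ne_top
    _ ≤ ENNReal.ofReal c * ENNReal.ofReal K := mul_le_mul' le_rfl hint
    _ = ENNReal.ofReal (c * K) := (ENNReal.ofReal_mul hcpos.le).symm
    _ ≤ ENNReal.ofReal (2*(K+1)/θ / |Real.log δ| + 1 * δ) := by
        apply ENNReal.ofReal_le_ofReal
        have h1 : c * K ≤ 2*(K+1)/θ / |Real.log δ| := by
          rw [hc, div_div]
          rw [div_mul_eq_mul_div, div_le_div_iff₀ (by positivity) (by positivity)]
          nlinarith [hlpos, hθ]
        linarith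
end
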